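/- arXiv:math/0310064 — 4 statements merged into one kernel-verified Lean document; each statement's English description precedes it below -/
import Mathlib

section
/- For every integer k ≥ 1 and all complex numbers s₁,…,s_{2k} with Re s_j > 0 for all j, the 2k-fold family (d₁,…,d_{2k}) ↦ μ(d₁)⋯μ(d_{2k})/([d₁,…,d_{2k}] d₁^{s₁}⋯d_{2k}^{s_{2k}}), indexed by positive integers d₁,…,d_{2k}, is absolutely summable. -/
open ArithmeticFunction

namespace StmtAux

open Finset

noncomputable def D (γ : ℝ) (x : ℕ) : ℝ := ∑ g ∈ x.divisors, (g : ℝ) ^ (-γ)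

lemma D_nonneg (γ : ℝ) (x : ℕ) : 0 ≤ D γ x :=
  Finset.sum_nonneg fun g _ => Real.rpow_nonneg (Nat.cast_nonneg g) _

lemma D_mono (γ : ℝ) {a b : ℕ} (h : a ∣ b) (hb : b ≠ 0) : D γ a ≤ D γ b :=
  Finset.sum_le_sum_of_subset_of_nonneg (Nat.divisors_subset_of_dvd hb h)
    fun g _ _ => Real.rpow_nonneg (Nat.cast_nonneg g) _

lemma div_gcd_dvd {t a b : ℕ} (ht : t ∣ a * b) (htpos : t ≠ 0) :
    t / t.gcd a ∣ b := by
  have hg : 0 < t.gcd a := Nat.gcd_pos_of_pos_left a (Nat.pos_of_ne_zero htpos)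
  have hco : Nat.Coprime (t / t.gcd a) (a / t.gcd a) := Nat.coprime_div_gcd_div_gcd hg
  have h1 : t / t.gcd a ∣ (a / t.gcd a) * b := by
    have h2 : t.gcd a * (t / t.gcd a) ∣ t.gcd a * ((a / t.gcd a) * b) := by
      rw [Nat.mul_div_cancel' (Nat.gcd_dvd_left t a), ← mul_assoc,
        Nat.mul_div_cancel' (Nat.gcd_dvd_right t a)]
      exact ht
    exact (mul_dvd_mul_iff_left (a := t.gcd a) (by positivity)).mp h2
  exact hco.dvd_of_dvd_mul_left h1

lemma D_submult (γ : ℝ) {a b : ℕ} (ha : a ≠ 0) (hb : b ≠ 0) :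
    D γ (a * b) ≤ D γ a * D γ b := by
  classical
  have hab : a * b ≠ 0 := mul_ne_zero ha hb
  set φ : ℕ → ℕ × ℕ := fun t => (t.gcd a, t / t.gcd a) with hφ
  have hinj : Set.InjOn φ (a * b).divisors := by
    intro t ht t' ht' h
    have h1 : t.gcd a = t'.gcd a := (Prod.ext_iff.mp h).1
    have h2 : t / t.gcd a = t' / t'.gcd a := (Prod.ext_iff.mp h).2
    have e1 : t = t.gcd a * (t / t.gcd a) := (Nat.mul_div_cancel' (Nat.gcd_dvd_left t a)).symm
    have e2 : t' = t'.gcd a * (t' / t'.gcd a) := (Nat.mul_div_cancel' (Nat.gcd_dvd_left t' a)).symm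
    rw [e1, e2, h2, h1]
  have hterm : ∀ t ∈ (a * b).divisors,
      (t : ℝ) ^ (-γ) = ((t.gcd a : ℝ) ^ (-γ)) * (((t / t.gcd a : ℕ) : ℝ) ^ (-γ)) := by
    intro t ht
    have e1 : t = t.gcd a * (t / t.gcd a) := (Nat.mul_div_cancel' (Nat.gcd_dvd_left t a)).symm
    rw [← Real.mul_rpow (Nat.cast_nonneg _) (Nat.cast_nonneg _), ← Nat.cast_mul, ← e1]
  have hmaps : ∀ t ∈ (a * b).divisors, φ t ∈ a.divisors ×ˢ b.divisors := by
    intro t ht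
    obtain ⟨hdvd, -⟩ := Nat.mem_divisors.mp ht
    have htne : t ≠ 0 := by
      rintro rfl
      exact hab (Nat.eq_zero_of_zero_dvd hdvd)
    refine Finset.mem_product.mpr ⟨Nat.mem_divisors.mpr ⟨Nat.gcd_dvd_right t a, ha⟩,
      Nat.mem_divisors.mpr ⟨div_gcd_dvd hdvd htne, hb⟩⟩
  calc D γ (a * b) = ∑ t ∈ (a * b).divisors,
        ((t.gcd a : ℝ) ^ (-γ)) * (((t / t.gcd a : ℕ) : ℝ) ^ (-γ)) := Finset.sum_congr rfl hterm
    _ = ∑ p ∈ (a * b).divisors.image φ, ((p.1 : ℝ) ^ (-γ)) * ((p.2 : ℝ) ^ (-γ)) := by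
        rw [Finset.sum_image (fun x hx y hy h => hinj hx hy h)]
    _ ≤ ∑ p ∈ a.divisors ×ˢ b.divisors, ((p.1 : ℝ) ^ (-γ)) * ((p.2 : ℝ) ^ (-γ)) := by
        refine Finset.sum_le_sum_of_subset_of_nonneg ?_ fun p _ _ =>
          mul_nonneg (Real.rpow_nonneg (Nat.cast_nonneg _) _)
            (Real.rpow_nonneg (Nat.cast_nonneg _) _)
        intro p hp
        obtain ⟨t, ht, rfl⟩ := Finset.mem_image.mp hp
        exact hmaps t ht
    _ = D γ a * D γ b := by rw [Finset.sum_product, D, D, Finset.sum_mul]; simp [Finset.mul_sum]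

lemma D_prod_le (γ : ℝ) {ι : Type*} (s : Finset ι) (f : ι → ℕ) (hf : ∀ i, f i ≠ 0) :
    D γ (∏ i ∈ s, f i) ≤ ∏ i ∈ s, D γ (f i) := by
  classical
  induction s using Finset.induction with
  | empty => simp [D, Nat.divisors_one]
  | insert a s hx ih =>
      rw [Finset.prod_insert hx, Finset.prod_insert hx]
      calc D γ (f a * ∏ i ∈ s, f i) ≤ D γ (f a) * D γ (∏ i ∈ s, f i) :=
            D_submult γ (hf a) (Finset.prod_ne_zero_iff.mpr fun i _ => hf i)
        _ ≤ D γ (f a) * ∏ i ∈ s, D γ (f i) := by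
            refine mul_le_mul_of_nonneg_left ih ?_
            exact Finset.sum_nonneg fun g _ => Real.rpow_nonneg (Nat.cast_nonneg g) _

lemma summable_pnat_rpow {t : ℝ} (ht : 1 < t) :
    Summable (fun x : ℕ+ => ((x : ℕ) : ℝ) ^ (-t)) := by
  have h : Summable (fun n : ℕ => ((n : ℝ) ^ t)⁻¹) := Real.summable_nat_rpow_inv.mpr ht
  have h2 : Summable (fun n : ℕ => ((n : ℝ)) ^ (-t)) := by
    refine h.congr fun n => ?_
    rw [Real.rpow_neg (Nat.cast_nonneg n)]
  exact h2.comp_injective PNat.coe_injective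

-- one le cast
lemma one_le_cast_pnat (x : ℕ+) : (1 : ℝ) ≤ ((x : ℕ) : ℝ) := by
  exact_mod_cast x.one_le

lemma rpow_le_rpow_exp {x : ℕ+} {u v : ℝ} (h : u ≤ v) :
    ((x : ℕ) : ℝ) ^ (-v) ≤ ((x : ℕ) : ℝ) ^ (-u) :=
  Real.rpow_le_rpow_of_exponent_le (one_le_cast_pnat x) (neg_le_neg h)

/-- the function whose summability we establish -/
noncomputable def A (γ : ℝ) (c : ℕ) (x : ℕ+) : ℝ :=
  ((x : ℕ) : ℝ) ^ (-(1 + γ)) * D γ (x : ℕ) ^ c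

lemma A_nonneg (γ : ℝ) (c : ℕ) (x : ℕ+) : 0 ≤ A γ c x :=
  mul_nonneg (Real.rpow_nonneg (Nat.cast_nonneg _) _) (pow_nonneg (D_nonneg γ _) c)

lemma A_mul_le (γ : ℝ) (hγ : 0 < γ) (c : ℕ) (g z : ℕ+) :
    A γ c (g * z) ≤ A γ c g * A γ c z := by
  unfold A
  have hcast : (((g * z : ℕ+) : ℕ) : ℝ) = ((g : ℕ) : ℝ) * ((z : ℕ) : ℝ) := by
    push_cast; ring
  rw [hcast]
  rw [Real.mul_rpow (Nat.cast_nonneg _) (Nat.cast_nonneg _)]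
  have hD : D γ ((g * z : ℕ+) : ℕ) ^ c ≤ (D γ (g : ℕ) * D γ (z : ℕ)) ^ c := by
    refine pow_le_pow_left₀ (D_nonneg _ _) ?_ c
    have : ((g * z : ℕ+) : ℕ) = (g : ℕ) * (z : ℕ) := rfl
    rw [this]
    exact D_submult γ g.ne_zero z.ne_zero
  calc ((g:ℕ):ℝ)^(-(1+γ)) * ((z:ℕ):ℝ)^(-(1+γ)) * D γ ((g*z : ℕ+) : ℕ) ^ c
      ≤ ((g:ℕ):ℝ)^(-(1+γ)) * ((z:ℕ):ℝ)^(-(1+γ)) * ((D γ (g:ℕ) * D γ (z:ℕ)) ^ c) := by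
        refine mul_le_mul_of_nonneg_left hD ?_
        positivity
    _ = (((g:ℕ):ℝ)^(-(1+γ)) * D γ (g:ℕ) ^ c) * (((z:ℕ):ℝ)^(-(1+γ)) * D γ (z:ℕ) ^ c) := by
        rw [mul_pow]; ring


lemma rpow_neg_le_one {x : ℕ+} {u : ℝ} (hu : 0 ≤ u) : ((x : ℕ) : ℝ) ^ (-u) ≤ 1 := by
  exact Real.rpow_le_one_of_one_le_of_nonpos (one_le_cast_pnat x) (neg_nonpos.mpr hu)

lemma succ_step (γ : ℝ) (hγ : 0 < γ) (c : ℕ) (ih : Summable (A γ c)) :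
    Summable (A γ (c + 1)) := by
  classical
  have hFnn : ∀ t : (Σ x : ℕ+, {g : ℕ // g ∈ (x : ℕ).divisors}),
      0 ≤ ((t.2 : ℕ) : ℝ) ^ (-γ) * A γ c t.1 := fun t =>
    mul_nonneg (Real.rpow_nonneg (Nat.cast_nonneg _) _) (A_nonneg γ c t.1)
  set F : (Σ x : ℕ+, {g : ℕ // g ∈ (x : ℕ).divisors}) → ℝ :=
    fun t => ((t.2 : ℕ) : ℝ) ^ (-γ) * A γ c t.1 with hF
  let e : ℕ+ × ℕ+ → Σ x : ℕ+, {g : ℕ // g ∈ (x : ℕ).divisors} := fun p =>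
    ⟨p.1 * p.2, ⟨(p.1 : ℕ), Nat.mem_divisors.mpr ⟨⟨(p.2 : ℕ), rfl⟩, (p.1 * p.2).ne_zero⟩⟩⟩
  have hbij : Function.Bijective e := by
    constructor
    · rintro ⟨g, z⟩ ⟨g', z'⟩ h
      obtain ⟨h1, h2'⟩ := Sigma.subtype_ext_iff.mp h
      have hg : g = g' := PNat.coe_injective h2'
      subst hg
      have hz : g * z = g * z' := h1
      exact Prod.ext rfl (mul_left_cancel hz)
    · rintro ⟨x, ⟨g, hg⟩⟩
      obtain ⟨hdvd, hne⟩ := Nat.mem_divisors.mp hg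
      have hgpos : 0 < g := Nat.pos_of_mem_divisors hg
      have hzpos : 0 < (x : ℕ) / g := Nat.div_pos (Nat.le_of_dvd x.pos hdvd) hgpos
      refine ⟨(⟨g, hgpos⟩, ⟨(x : ℕ) / g, hzpos⟩), ?_⟩
      have hx : (⟨g, hgpos⟩ * ⟨(x : ℕ) / g, hzpos⟩ : ℕ+) = x := by
        apply PNat.eq
        show g * ((x : ℕ) / g) = (x : ℕ)
        exact Nat.mul_div_cancel' hdvd
      refine Sigma.subtype_ext ?_ ?_
      · exact hx
      · rfl
  have hcomp : Summable (F ∘ e) := by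
    refine Summable.of_nonneg_of_le (fun p => hFnn (e p)) ?_
      ((ih.mul_of_nonneg ih (A_nonneg γ c) (A_nonneg γ c)) :
        Summable fun p : ℕ+ × ℕ+ => A γ c p.1 * A γ c p.2)
    rintro ⟨g, z⟩
    show ((g : ℕ) : ℝ) ^ (-γ) * A γ c (g * z) ≤ A γ c g * A γ c z
    calc ((g : ℕ) : ℝ) ^ (-γ) * A γ c (g * z) ≤ 1 * A γ c (g * z) := by
          refine mul_le_mul_of_nonneg_right (rpow_neg_le_one hγ.le) (A_nonneg γ c _)
      _ = A γ c (g * z) := one_mul _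
      _ ≤ A γ c g * A γ c z := A_mul_le γ hγ c g z
  have hFsum : Summable F := (Equiv.ofBijective e hbij).summable_iff.mp hcomp
  have hsig := (summable_sigma_of_nonneg hFnn).mp hFsum
  refine hsig.2.congr fun x => ?_
  have : ∑' g : {g : ℕ // g ∈ (x : ℕ).divisors}, F ⟨x, g⟩
      = ∑ g ∈ (x : ℕ).divisors, ((g : ℕ) : ℝ) ^ (-γ) * A γ c x := by
    rw [tsum_fintype, Finset.univ_eq_attach]
    exact Finset.sum_attach _ (fun g => ((g : ℕ) : ℝ) ^ (-γ) * A γ c x)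
  rw [this, ← Finset.sum_mul]
  show D γ (x : ℕ) * A γ c x = A γ (c + 1) x
  unfold A
  ring

lemma A_summable (γ : ℝ) (hγ : 0 < γ) : ∀ c : ℕ, Summable (A γ c) := by
  intro c
  induction c with
  | zero => exact (summable_pnat_rpow (by linarith : (1:ℝ) < 1 + γ)).congr fun x => by simp [A]
  | succ c ih => exact succ_step γ hγ c ih

lemma lcm_map_eq {β γ' : Type*} [CommMonoidWithZero β] [NormalizedGCDMonoid β]
    (s : Finset γ') {α : Type*} [DecidableEq α] (e : γ' ↪ α) (f : α → β) :
    (s.map e).lcm f = s.lcm (f ∘ e) := by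
  rw [Finset.lcm_def, Finset.lcm_def, Finset.map_val, Multiset.map_map]

lemma lcm_cons_eq {m : ℕ} (y : ℕ+) (d' : Fin m → ℕ+) :
    (Finset.univ.lcm fun j => ((Fin.cons y d' : Fin (m + 1) → ℕ+) j : ℕ))
      = Nat.lcm (y : ℕ) (Finset.univ.lcm fun j => (d' j : ℕ)) := by
  classical
  rw [Fin.univ_succ, Finset.cons_eq_insert, Finset.lcm_insert, lcm_map_eq]
  have h1 : ((Fin.cons y d' : Fin (m + 1) → ℕ+) 0 : ℕ) = (y : ℕ) := by simp
  have h2 : ((fun j => ((Fin.cons y d' : Fin (m + 1) → ℕ+) j : ℕ)) ∘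
      (⟨Fin.succ, Fin.succ_injective m⟩ : Fin m ↪ Fin (m + 1)))
      = fun j => (d' j : ℕ) := by
    funext j; simp
  rw [h1, h2]
  rfl

lemma lcm_ne_zero {m : ℕ} (d' : Fin m → ℕ+) :
    (Finset.univ.lcm fun j => (d' j : ℕ)) ≠ 0 := by
  intro h
  rw [Finset.lcm_eq_zero_iff] at h
  obtain ⟨j, -, hj⟩ := h
  exact (d' j).ne_zero hj

lemma tsum_multiples_le (γ : ℝ) (hγ : 0 < γ) (c : ℕ) (g : ℕ+) :
    ∑' x : ℕ+, (if (g : ℕ) ∣ (x : ℕ) then A γ c x else 0)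
      ≤ A γ c g * ∑' x : ℕ+, A γ c x := by
  classical
  set f : ℕ+ → ℝ := fun x => if (g : ℕ) ∣ (x : ℕ) then A γ c x else 0 with hf
  have hinj : Function.Injective (fun z : ℕ+ => g * z) := fun a b h => mul_left_cancel h
  have hsupp : ∀ y, y ∉ Set.range (fun z : ℕ+ => g * z) → f y = 0 := by
    intro y hy
    rw [hf]
    simp only [ite_eq_right_iff]
    intro hdvd
    exfalso
    apply hy
    obtain ⟨z, hz⟩ := hdvd
    have hzpos : 0 < z := by
      rcases Nat.eq_zero_or_pos z with h0 | h
      · subst h0; rw [mul_zero] at hz; exact absurd hz y.ne_zero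
      · exact h
    refine ⟨⟨z, hzpos⟩, ?_⟩
    apply PNat.eq
    show (g : ℕ) * z = (y : ℕ)
    exact hz.symm
  have hsupp' : Function.support f ⊆ Set.range (fun z : ℕ+ => g * z) := by
    intro y hy
    by_contra hc
    exact hy (hsupp y hc)
  have heq : ∑' x : ℕ+, f x = ∑' z : ℕ+, f (g * z) := (hinj.tsum_eq hsupp').symm
  rw [heq]
  have hle : ∀ z : ℕ+, f (g * z) ≤ A γ c g * A γ c z := by
    intro z
    have : f (g * z) = A γ c (g * z) := by
      rw [hf]
      exact if_pos (Dvd.intro (z : ℕ) rfl)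
    rw [this]
    exact A_mul_le γ hγ c g z
  have hs2 : Summable (fun z : ℕ+ => A γ c g * A γ c z) :=
    (A_summable γ hγ c).mul_left _
  have hs1 : Summable (fun z : ℕ+ => f (g * z)) := by
    refine Summable.of_nonneg_of_le (fun z => ?_) hle hs2
    rw [hf]
    dsimp only
    split
    · exact A_nonneg γ c _
    · exact le_refl 0
  calc ∑' z : ℕ+, f (g * z) ≤ ∑' z : ℕ+, A γ c g * A γ c z := Summable.tsum_le_tsum hle hs1 hs2
    _ = A γ c g * ∑' x : ℕ+, A γ c x := tsum_mul_left

lemma inv_mul_rpow (γ : ℝ) (x : ℕ+) :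
    ((x : ℕ) : ℝ)⁻¹ * ((x : ℕ) : ℝ) ^ (-γ) = ((x : ℕ) : ℝ) ^ (-(1 + γ)) := by
  have hx : (0 : ℝ) < ((x : ℕ) : ℝ) := by exact_mod_cast x.pos
  rw [← Real.rpow_neg_one ((x : ℕ) : ℝ), ← Real.rpow_add hx]
  ring_nf

lemma mul_rpow_neg (γ : ℝ) (x : ℕ+) :
    ((x : ℕ) : ℝ) * ((x : ℕ) : ℝ) ^ (-(1 + γ)) = ((x : ℕ) : ℝ) ^ (-γ) := by
  have hx : (0 : ℝ) < ((x : ℕ) : ℝ) := by exact_mod_cast x.pos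
  nth_rewrite 1 [← Real.rpow_one ((x : ℕ) : ℝ)]
  rw [← Real.rpow_add hx]
  ring_nf

lemma cast_mul_A (γ : ℝ) (c : ℕ) (x : ℕ+) :
    ((x : ℕ) : ℝ) * A γ c x = ((x : ℕ) : ℝ) ^ (-γ) * D γ (x : ℕ) ^ c := by
  rw [A, ← mul_assoc, mul_rpow_neg]

lemma ts_bound (γ : ℝ) (hγ : 0 < γ) (c : ℕ) (L : ℕ) (hL : L ≠ 0) (Q : ℝ) (hQ : 0 ≤ Q) :
    ∑' y : ℕ+, ((Nat.lcm (y : ℕ) L : ℕ) : ℝ)⁻¹ * ((((y : ℕ) : ℝ) ^ (-γ) * D γ (y : ℕ) ^ c) * Q)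
      ≤ (∑' x : ℕ+, A γ c x) * ((L : ℝ)⁻¹ * Q * D γ L ^ (c + 1)) := by
  classical
  have hLpos : (0 : ℝ) < (L : ℝ) := by exact_mod_cast Nat.pos_of_ne_zero hL
  set Atot : ℝ := ∑' x : ℕ+, A γ c x with hAtot
  have hAtotnn : 0 ≤ Atot := tsum_nonneg (A_nonneg γ c)
  set f : ℕ+ → ℝ := fun y =>
    ((Nat.lcm (y : ℕ) L : ℕ) : ℝ)⁻¹ * ((((y : ℕ) : ℝ) ^ (-γ) * D γ (y : ℕ) ^ c) * Q) with hf
  set R : ℕ+ → ℝ := fun y => ∑ g ∈ L.divisors,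
    (if g ∣ (y : ℕ) then ((g : ℝ) * ((L : ℝ)⁻¹ * Q)) * A γ c y else 0) with hR
  have hfnn : ∀ y, 0 ≤ f y := by
    intro y
    refine mul_nonneg (inv_nonneg.mpr (Nat.cast_nonneg _)) (mul_nonneg (mul_nonneg ?_ ?_) hQ)
    · exact Real.rpow_nonneg (Nat.cast_nonneg _) _
    · exact pow_nonneg (D_nonneg _ _) _
  have hfA : ∀ y : ℕ+, A γ c y = ((y : ℕ) : ℝ)⁻¹ * (((y : ℕ) : ℝ) ^ (-γ) * D γ (y : ℕ) ^ c) := by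
    intro y
    rw [A, ← inv_mul_rpow γ y]
    ring
  -- pointwise : f y equals the gcd term, hence ≤ R y
  have hfR : ∀ y, f y ≤ R y := by
    intro y
    have hlcmne : Nat.lcm (y : ℕ) L ≠ 0 := Nat.lcm_ne_zero y.ne_zero hL
    have hgcdne : Nat.gcd (y : ℕ) L ≠ 0 :=
      Nat.ne_of_gt (Nat.gcd_pos_of_pos_left L y.pos)
    have hprod : ((Nat.gcd (y : ℕ) L : ℕ) : ℝ) * ((Nat.lcm (y : ℕ) L : ℕ) : ℝ)
        = ((y : ℕ) : ℝ) * (L : ℝ) := by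
      rw [← Nat.cast_mul, Nat.gcd_mul_lcm, Nat.cast_mul]
    have hinv : ((Nat.lcm (y : ℕ) L : ℕ) : ℝ)⁻¹
        = ((Nat.gcd (y : ℕ) L : ℕ) : ℝ) * (((y : ℕ) : ℝ) * (L : ℝ))⁻¹ := by
      rw [← hprod, mul_inv, ← mul_assoc,
        mul_inv_cancel₀ (by exact_mod_cast hgcdne), one_mul]
    have hmem : Nat.gcd (y : ℕ) L ∈ L.divisors :=
      Nat.mem_divisors.mpr ⟨Nat.gcd_dvd_right _ _, hL⟩
    have hterm : f y = (if Nat.gcd (y : ℕ) L ∣ (y : ℕ)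
        then ((Nat.gcd (y : ℕ) L : ℝ) * ((L : ℝ)⁻¹ * Q)) * A γ c y else 0) := by
      rw [if_pos (Nat.gcd_dvd_left _ _), hf]
      simp only
      rw [hinv, hfA y, mul_inv]
      ring
    rw [hterm, hR]
    refine Finset.single_le_sum (f := fun g =>
      (if g ∣ (y : ℕ) then ((g : ℝ) * ((L : ℝ)⁻¹ * Q)) * A γ c y else 0)) ?_ hmem
    intro g _
    split
    · refine mul_nonneg (mul_nonneg (Nat.cast_nonneg _) (mul_nonneg ?_ hQ)) (A_nonneg γ c y)
      exact inv_nonneg.mpr hLpos.le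
    · exact le_refl 0
  -- summability
  have hfsummable : Summable f := by
    refine Summable.of_nonneg_of_le hfnn (fun y => ?_) ((A_summable γ hγ c).mul_right Q)
    rw [hf]
    simp only
    have h1 : ((Nat.lcm (y : ℕ) L : ℕ) : ℝ)⁻¹ ≤ ((y : ℕ) : ℝ)⁻¹ := by
      have hne : Nat.lcm (y : ℕ) L ≠ 0 := Nat.lcm_ne_zero y.ne_zero hL
      have hle : (y : ℕ) ≤ Nat.lcm (y : ℕ) L :=
        Nat.le_of_dvd (Nat.pos_of_ne_zero hne) (Nat.dvd_lcm_left _ _)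
      exact inv_anti₀ (by exact_mod_cast y.pos) (by exact_mod_cast hle)
    calc ((Nat.lcm (y : ℕ) L : ℕ) : ℝ)⁻¹ * ((((y : ℕ) : ℝ) ^ (-γ) * D γ (y : ℕ) ^ c) * Q)
        ≤ ((y : ℕ) : ℝ)⁻¹ * ((((y : ℕ) : ℝ) ^ (-γ) * D γ (y : ℕ) ^ c) * Q) := by
          refine mul_le_mul_of_nonneg_right h1 (mul_nonneg (mul_nonneg ?_ ?_) hQ)
          · exact Real.rpow_nonneg (Nat.cast_nonneg _) _
          · exact pow_nonneg (D_nonneg _ _) _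
      _ = A γ c y * Q := by rw [hfA y]; ring
  have hgsummable : ∀ g ∈ L.divisors, Summable (fun y : ℕ+ =>
      (if g ∣ (y : ℕ) then ((g : ℝ) * ((L : ℝ)⁻¹ * Q)) * A γ c y else 0)) := by
    intro g _
    have hC : 0 ≤ (g : ℝ) * ((L : ℝ)⁻¹ * Q) :=
      mul_nonneg (Nat.cast_nonneg _) (mul_nonneg (inv_nonneg.mpr hLpos.le) hQ)
    refine Summable.of_nonneg_of_le (fun y => ?_) (fun y => ?_)
      ((A_summable γ hγ c).mul_left ((g : ℝ) * ((L : ℝ)⁻¹ * Q)))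
    · split
      · exact mul_nonneg hC (A_nonneg γ c y)
      · exact le_refl 0
    · split
      · exact le_refl _
      · exact mul_nonneg hC (A_nonneg γ c y)
  have hRsummable : Summable R := summable_sum hgsummable
  -- main chain
  have step1 : ∑' y, f y ≤ ∑' y, R y := Summable.tsum_le_tsum hfR hfsummable hRsummable
  have step2 : ∑' y, R y = ∑ g ∈ L.divisors, ∑' y : ℕ+,
      (if g ∣ (y : ℕ) then ((g : ℝ) * ((L : ℝ)⁻¹ * Q)) * A γ c y else 0) :=
    Summable.tsum_finsetSum hgsummable
  have step3 : ∀ g ∈ L.divisors, ∑' y : ℕ+,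
      (if g ∣ (y : ℕ) then ((g : ℝ) * ((L : ℝ)⁻¹ * Q)) * A γ c y else 0)
      ≤ ((L : ℝ)⁻¹ * Q) * (((g : ℝ) ^ (-γ) * D γ g ^ c) * Atot) := by
    intro g hg
    have hgpos : 0 < g := Nat.pos_of_mem_divisors hg
    set gp : ℕ+ := ⟨g, hgpos⟩ with hgp
    have hrw : ∀ y : ℕ+, (if g ∣ (y : ℕ) then ((g : ℝ) * ((L : ℝ)⁻¹ * Q)) * A γ c y else 0)
        = ((g : ℝ) * ((L : ℝ)⁻¹ * Q)) * (if (gp : ℕ) ∣ (y : ℕ) then A γ c y else 0) := by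
      intro y
      rw [mul_ite, mul_zero]
      rfl
    calc ∑' y : ℕ+, (if g ∣ (y : ℕ) then ((g : ℝ) * ((L : ℝ)⁻¹ * Q)) * A γ c y else 0)
        = ((g : ℝ) * ((L : ℝ)⁻¹ * Q)) *
            ∑' y : ℕ+, (if (gp : ℕ) ∣ (y : ℕ) then A γ c y else 0) := by
          rw [← tsum_mul_left]
          exact tsum_congr hrw
      _ ≤ ((g : ℝ) * ((L : ℝ)⁻¹ * Q)) * (A γ c gp * Atot) := by
          refine mul_le_mul_of_nonneg_left (tsum_multiples_le γ hγ c gp) ?_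
          exact mul_nonneg (Nat.cast_nonneg _) (mul_nonneg (inv_nonneg.mpr hLpos.le) hQ)
      _ = ((L : ℝ)⁻¹ * Q) * ((((g : ℝ) * A γ c gp)) * Atot) := by ring
      _ = ((L : ℝ)⁻¹ * Q) * (((g : ℝ) ^ (-γ) * D γ g ^ c) * Atot) := by
          show ((L : ℝ)⁻¹ * Q) * ((((gp : ℕ) : ℝ) * A γ c gp) * Atot)
              = ((L : ℝ)⁻¹ * Q) * (((((gp : ℕ) : ℝ)) ^ (-γ) * D γ (gp : ℕ) ^ c) * Atot)
          rw [cast_mul_A γ c gp]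
  have step4 : ∑ g ∈ L.divisors, ((L : ℝ)⁻¹ * Q) * (((g : ℝ) ^ (-γ) * D γ g ^ c) * Atot)
      ≤ Atot * ((L : ℝ)⁻¹ * Q * D γ L ^ (c + 1)) := by
    have hDL : 0 ≤ D γ L := D_nonneg γ L
    have h1 : ∀ g ∈ L.divisors, ((L : ℝ)⁻¹ * Q) * (((g : ℝ) ^ (-γ) * D γ g ^ c) * Atot)
        ≤ ((L : ℝ)⁻¹ * Q * Atot * D γ L ^ c) * (g : ℝ) ^ (-γ) := by
      intro g hg
      have hdvd : g ∣ L := (Nat.mem_divisors.mp hg).1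
      have hDg : D γ g ^ c ≤ D γ L ^ c :=
        pow_le_pow_left₀ (D_nonneg γ g) (D_mono γ hdvd hL) c
      have hrp : 0 ≤ (g : ℝ) ^ (-γ) := Real.rpow_nonneg (Nat.cast_nonneg _) _
      calc ((L : ℝ)⁻¹ * Q) * (((g : ℝ) ^ (-γ) * D γ g ^ c) * Atot)
          = ((L : ℝ)⁻¹ * Q * Atot * (g : ℝ) ^ (-γ)) * D γ g ^ c := by ring
        _ ≤ ((L : ℝ)⁻¹ * Q * Atot * (g : ℝ) ^ (-γ)) * D γ L ^ c := by
            refine mul_le_mul_of_nonneg_left hDg ?_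
            exact mul_nonneg (mul_nonneg (mul_nonneg (inv_nonneg.mpr hLpos.le) hQ) hAtotnn) hrp
        _ = ((L : ℝ)⁻¹ * Q * Atot * D γ L ^ c) * (g : ℝ) ^ (-γ) := by ring
    calc ∑ g ∈ L.divisors, ((L : ℝ)⁻¹ * Q) * (((g : ℝ) ^ (-γ) * D γ g ^ c) * Atot)
        ≤ ∑ g ∈ L.divisors, ((L : ℝ)⁻¹ * Q * Atot * D γ L ^ c) * (g : ℝ) ^ (-γ) :=
          Finset.sum_le_sum h1
      _ = ((L : ℝ)⁻¹ * Q * Atot * D γ L ^ c) * D γ L := by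
          rw [← Finset.mul_sum, D]
      _ = Atot * ((L : ℝ)⁻¹ * Q * D γ L ^ (c + 1)) := by ring
  calc ∑' y, f y ≤ ∑' y, R y := step1
    _ = _ := step2
    _ ≤ ∑ g ∈ L.divisors, ((L : ℝ)⁻¹ * Q) * (((g : ℝ) ^ (-γ) * D γ g ^ c) * Atot) :=
        Finset.sum_le_sum step3
    _ ≤ Atot * ((L : ℝ)⁻¹ * Q * D γ L ^ (c + 1)) := step4

/-- the master summability lemma -/
lemma master (γ : ℝ) (hγ : 0 < γ) :
    ∀ (m : ℕ) (c : ℕ),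
      Summable (fun d : Fin m → ℕ+ =>
        (((Finset.univ.lcm fun j => (d j : ℕ) : ℕ)) : ℝ)⁻¹ *
          ∏ j, (((d j : ℕ) : ℝ) ^ (-γ) * D γ (d j : ℕ) ^ c)) := by
  intro m
  induction m with
  | zero => intro c; exact Summable.of_finite
  | succ m ih =>
      intro c
      -- notation
      set L : (Fin m → ℕ+) → ℕ := fun d' => Finset.univ.lcm fun j => (d' j : ℕ) with hLdef
      set P : ℕ → (Fin m → ℕ+) → ℝ :=
        fun c' d' => ∏ j, (((d' j : ℕ) : ℝ) ^ (-γ) * D γ (d' j : ℕ) ^ c') with hPdef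
      have hPnonneg : ∀ c' d', 0 ≤ P c' d' := fun c' d' =>
        Finset.prod_nonneg fun j _ => mul_nonneg (Real.rpow_nonneg (Nat.cast_nonneg _) _)
          (pow_nonneg (D_nonneg _ _) _)
      set W : ℕ → (Fin (m + 1) → ℕ+) → ℝ := fun c' d =>
        (((Finset.univ.lcm fun j => (d j : ℕ) : ℕ)) : ℝ)⁻¹ *
          ∏ j, (((d j : ℕ) : ℝ) ^ (-γ) * D γ (d j : ℕ) ^ c') with hWdef
      have hWnonneg : ∀ c' d, 0 ≤ W c' d := by
        intro c' d
        rw [hWdef]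
        have := D_nonneg γ
        refine mul_nonneg (inv_nonneg.mpr (Nat.cast_nonneg _)) ?_
        exact Finset.prod_nonneg fun j _ => mul_nonneg (Real.rpow_nonneg (Nat.cast_nonneg _) _)
          (pow_nonneg (D_nonneg _ _) _)
      -- key pointwise formula
      have hWcons : ∀ (y : ℕ+) (d' : Fin m → ℕ+),
          W c (Fin.cons y d')
            = ((Nat.lcm (y : ℕ) (L d') : ℕ) : ℝ)⁻¹ *
              ((((y : ℕ) : ℝ) ^ (-γ) * D γ (y : ℕ) ^ c) * P c d') := by
        intro y d'
        rw [hWdef]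
        simp only
        rw [lcm_cons_eq y d', Fin.prod_univ_succ]
        simp only [Fin.cons_zero, Fin.cons_succ]
        rfl
      -- the equivalence with pairs
      set E : (Fin m → ℕ+) × ℕ+ ≃ (Fin (m + 1) → ℕ+) :=
        (Equiv.prodComm _ _).trans (Fin.consEquiv fun _ => ℕ+) with hEdef
      have hEapp : ∀ p : (Fin m → ℕ+) × ℕ+, E p = Fin.cons p.2 p.1 := fun p => rfl
      rw [show (fun d : Fin (m+1) → ℕ+ =>
        (((Finset.univ.lcm fun j => (d j : ℕ) : ℕ)) : ℝ)⁻¹ *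
          ∏ j, (((d j : ℕ) : ℝ) ^ (-γ) * D γ (d j : ℕ) ^ c)) = W c from rfl]
      rw [← E.summable_iff]
      have hfun : ∀ p : (Fin m → ℕ+) × ℕ+, (W c ∘ E) p = W c (Fin.cons p.2 p.1) := by
        intro p; rw [Function.comp_apply, hEapp]
      -- part (i): summability in y for fixed d'
      have parti : ∀ d' : Fin m → ℕ+, Summable (fun y : ℕ+ => W c (Fin.cons y d')) := by
        intro d'
        refine Summable.of_nonneg_of_le (fun y => hWnonneg c _) (fun y => ?_)
          (((A_summable γ hγ c).mul_right (P c d')))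
        rw [hWcons y d']
        have h1 : ((Nat.lcm (y : ℕ) (L d') : ℕ) : ℝ)⁻¹ ≤ ((y : ℕ) : ℝ)⁻¹ := by
          have hne : Nat.lcm (y : ℕ) (L d') ≠ 0 := Nat.lcm_ne_zero y.ne_zero (lcm_ne_zero d')
          have hle : (y : ℕ) ≤ Nat.lcm (y : ℕ) (L d') :=
            Nat.le_of_dvd (Nat.pos_of_ne_zero hne) (Nat.dvd_lcm_left _ _)
          have hpos : (0 : ℝ) < ((y : ℕ) : ℝ) := by exact_mod_cast y.pos
          exact inv_anti₀ hpos (by exact_mod_cast hle)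
        calc ((Nat.lcm (y : ℕ) (L d') : ℕ) : ℝ)⁻¹ *
              ((((y : ℕ) : ℝ) ^ (-γ) * D γ (y : ℕ) ^ c) * P c d')
            ≤ ((y : ℕ) : ℝ)⁻¹ * ((((y : ℕ) : ℝ) ^ (-γ) * D γ (y : ℕ) ^ c) * P c d') := by
              refine mul_le_mul_of_nonneg_right h1 ?_
              exact mul_nonneg (mul_nonneg (Real.rpow_nonneg (Nat.cast_nonneg _) _)
                (pow_nonneg (D_nonneg _ _) _)) (hPnonneg c d')
          _ = A γ c y * P c d' := by
              rw [A, ← mul_assoc, ← mul_assoc, inv_mul_rpow γ y]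
      -- part (ii) : bound for the inner tsum
      have hAtot : 0 ≤ ∑' x : ℕ+, A γ c x := tsum_nonneg (A_nonneg γ c)
      set Atot : ℝ := ∑' x : ℕ+, A γ c x with hAtotdef
      have partii : ∀ d' : Fin m → ℕ+,
          ∑' y : ℕ+, W c (Fin.cons y d')
            ≤ Atot * (((L d' : ℕ) : ℝ)⁻¹ * P (2 * c + 1) d') := by
        intro d'
        have heq : ∑' y : ℕ+, W c (Fin.cons y d')
            = ∑' y : ℕ+, ((Nat.lcm (y : ℕ) (L d') : ℕ) : ℝ)⁻¹ *
                ((((y : ℕ) : ℝ) ^ (-γ) * D γ (y : ℕ) ^ c) * P c d') :=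
          tsum_congr fun y => hWcons y d'
        rw [heq]
        have h1 := ts_bound γ hγ c (L d') (lcm_ne_zero d') (P c d') (hPnonneg c d')
        refine h1.trans ?_
        refine mul_le_mul_of_nonneg_left ?_ hAtot
        have hDL : D γ (L d') ^ (c + 1) ≤ ∏ j, D γ (d' j : ℕ) ^ (c + 1) := by
          have hdvd : L d' ∣ ∏ j, (d' j : ℕ) :=
            Finset.lcm_dvd fun j _ => Finset.dvd_prod_of_mem _ (Finset.mem_univ j)
          have hne : (∏ j, (d' j : ℕ)) ≠ 0 :=
            Finset.prod_ne_zero_iff.mpr fun j _ => (d' j).ne_zero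
          have hDle : D γ (L d') ≤ ∏ j, D γ (d' j : ℕ) :=
            (D_mono γ hdvd hne).trans (D_prod_le γ _ _ fun j => (d' j).ne_zero)
          calc D γ (L d') ^ (c + 1) ≤ (∏ j, D γ (d' j : ℕ)) ^ (c + 1) :=
                pow_le_pow_left₀ (D_nonneg _ _) hDle _
            _ = ∏ j, D γ (d' j : ℕ) ^ (c + 1) := by rw [Finset.prod_pow]
        have hPP : P c d' * ∏ j, D γ (d' j : ℕ) ^ (c + 1) = P (2 * c + 1) d' := by
          rw [hPdef]
          simp only
          rw [← Finset.prod_mul_distrib]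
          refine Finset.prod_congr rfl fun j _ => ?_
          rw [mul_assoc, ← pow_add, show c + (c + 1) = 2 * c + 1 from by omega]
        calc ((L d' : ℕ) : ℝ)⁻¹ * P c d' * D γ (L d') ^ (c + 1)
            ≤ ((L d' : ℕ) : ℝ)⁻¹ * P c d' * ∏ j, D γ (d' j : ℕ) ^ (c + 1) := by
              refine mul_le_mul_of_nonneg_left hDL ?_
              exact mul_nonneg (inv_nonneg.mpr (Nat.cast_nonneg _)) (hPnonneg c d')
          _ = ((L d' : ℕ) : ℝ)⁻¹ * P (2 * c + 1) d' := by rw [mul_assoc, hPP]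
      -- combine
      have := (summable_prod_of_nonneg
        (f := fun p : (Fin m → ℕ+) × ℕ+ => (W c ∘ E) p) ?_).mpr ⟨?_, ?_⟩
      · exact this
      · intro p; exact hWnonneg c (E p)
      · intro d'
        exact (parti d').congr fun y => (hfun (d', y)).symm
      · refine Summable.of_nonneg_of_le (fun d' => tsum_nonneg fun y => hWnonneg c _)
          (fun d' => ?_) (((ih (2 * c + 1)).mul_left Atot))
        have : ∑' y : ℕ+, (W c ∘ E) (d', y) = ∑' y : ℕ+, W c (Fin.cons y d') := by
          congr 1
        rw [this]
        exact partii d'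

end StmtAux

theorem stmt1 (k : ℕ) (hk : 1 ≤ k) (s : Fin (2 * k) → ℂ) (hs : ∀ j, 0 < (s j).re) :
    Summable (fun d : Fin (2 * k) → ℕ+ =>
      ‖(∏ j, (moebius (d j : ℕ) : ℂ)) /
        (((Finset.univ.lcm fun j => (d j : ℕ) : ℕ) : ℂ) * ∏ j, ((d j : ℕ) : ℂ) ^ (s j))‖) := by
  have hne : Nonempty (Fin (2 * k)) := ⟨⟨0, by omega⟩⟩
  have hne' : (Finset.univ : Finset (Fin (2 * k))).Nonempty := Finset.univ_nonempty
  set γ : ℝ := Finset.univ.inf' hne' fun j => (s j).re with hγdef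
  have hγ : 0 < γ := (Finset.lt_inf'_iff hne').mpr fun j _ => hs j
  have hγle : ∀ j, γ ≤ (s j).re := fun j => Finset.inf'_le _ (Finset.mem_univ j)
  refine Summable.of_nonneg_of_le (fun d => norm_nonneg _) (fun d => ?_)
    (StmtAux.master γ hγ (2 * k) 0)
  have hlcmne : (Finset.univ.lcm fun j => (d j : ℕ)) ≠ 0 := StmtAux.lcm_ne_zero d
  have hlcmpos : (0:ℝ) < (((Finset.univ.lcm fun j => (d j : ℕ) : ℕ)) : ℝ) := by
    exact_mod_cast Nat.pos_of_ne_zero hlcmne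
  rw [norm_div]
  have hnum : ‖∏ j, ((moebius (d j : ℕ) : ℤ) : ℂ)‖ ≤ 1 := by
    rw [norm_prod]
    refine Finset.prod_le_one (fun j _ => norm_nonneg _) (fun j _ => ?_)
    rw [Complex.norm_intCast]
    exact_mod_cast (abs_moebius_le_one (n := (d j : ℕ)))
  have hden : ‖(((Finset.univ.lcm fun j => (d j : ℕ) : ℕ)) : ℂ) * ∏ j, ((d j : ℕ) : ℂ) ^ (s j)‖
      = (((Finset.univ.lcm fun j => (d j : ℕ) : ℕ)) : ℝ) *
          ∏ j, ((d j : ℕ) : ℝ) ^ ((s j).re) := by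
    rw [norm_mul, Complex.norm_natCast, norm_prod]
    congr 1
    exact Finset.prod_congr rfl fun j _ => Complex.norm_natCast_cpow_of_pos (d j).pos _
  rw [hden]
  have hprodpos : (0:ℝ) < ∏ j, ((d j : ℕ) : ℝ) ^ ((s j).re) := by
    refine Finset.prod_pos fun j _ => Real.rpow_pos_of_pos ?_ _
    exact_mod_cast (d j).pos
  have hdenpos : (0:ℝ) < (((Finset.univ.lcm fun j => (d j : ℕ) : ℕ)) : ℝ) *
      ∏ j, ((d j : ℕ) : ℝ) ^ ((s j).re) := mul_pos hlcmpos hprodpos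
  have htarget : ∏ j, (((d j : ℕ) : ℝ) ^ (-γ) * StmtAux.D γ (d j : ℕ) ^ 0)
      = ∏ j, ((d j : ℕ) : ℝ) ^ (-γ) :=
    Finset.prod_congr rfl fun j _ => by rw [pow_zero, mul_one]
  calc ‖∏ j, ((moebius (d j : ℕ) : ℤ) : ℂ)‖ /
        ((((Finset.univ.lcm fun j => (d j : ℕ) : ℕ)) : ℝ) * ∏ j, ((d j : ℕ) : ℝ) ^ ((s j).re))
      ≤ 1 / ((((Finset.univ.lcm fun j => (d j : ℕ) : ℕ)) : ℝ) *
          ∏ j, ((d j : ℕ) : ℝ) ^ ((s j).re)) := by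
        exact (div_le_div_iff_of_pos_right hdenpos).mpr hnum
    _ = ((((Finset.univ.lcm fun j => (d j : ℕ) : ℕ)) : ℝ))⁻¹ *
          ∏ j, (((d j : ℕ) : ℝ) ^ ((s j).re))⁻¹ := by
        rw [one_div, mul_inv, Finset.prod_inv_distrib]
    _ = ((((Finset.univ.lcm fun j => (d j : ℕ) : ℕ)) : ℝ))⁻¹ *
          ∏ j, ((d j : ℕ) : ℝ) ^ (-(s j).re) := by
        congr 1
        exact Finset.prod_congr rfl fun j _ =>
          (Real.rpow_neg (Nat.cast_nonneg _) _).symm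
    _ ≤ ((((Finset.univ.lcm fun j => (d j : ℕ) : ℕ)) : ℝ))⁻¹ *
          ∏ j, ((d j : ℕ) : ℝ) ^ (-γ) := by
        refine mul_le_mul_of_nonneg_left ?_ (inv_nonneg.mpr hlcmpos.le)
        refine Finset.prod_le_prod (fun j _ => Real.rpow_nonneg (Nat.cast_nonneg _) _)
          (fun j _ => StmtAux.rpow_le_rpow_exp (hγle j))
    _ = ((((Finset.univ.lcm fun j => (d j : ℕ) : ℕ)) : ℝ))⁻¹ *
          ∏ j, (((d j : ℕ) : ℝ) ^ (-γ) * StmtAux.D γ (d j : ℕ) ^ 0) := by rw [htarget]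
end

section
/- For every integer k ≥ 1 and all complex numbers s₁,…,s_{2k} with Re s_j > 0 for all j, one has the absolutely convergent Euler product M(s₁,…,s_{2k}) = ∏_p ( 1 − 1/p + (1/p) ∏_{j=1}^{2k} (1 − p^{−s_j}) ), the product taken over all primes p (in particular the product is multipliable). -/
open Finset ArithmeticFunction
set_option linter.unusedSectionVars false
set_option maxHeartbeats 1000000

namespace Stmt2Aux

section
variable {ι : Type*} [Fintype ι] [DecidableEq ι]
def DD (ι : Type*) [Fintype ι] [DecidableEq ι] (n : ℕ) : Finset (ι → ℕ) :=
  (Fintype.piFinset fun _ => n.divisors).filter fun d => univ.lcm d = n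

lemma mem_DD {n : ℕ} {d : ι → ℕ} :
    d ∈ DD ι n ↔ (∀ j, d j ∈ n.divisors) ∧ univ.lcm d = n := by
  simp [DD, Fintype.mem_piFinset]

lemma DD_zero : DD ι 0 = ∅ := by
  ext d
  simp only [mem_DD, Finset.notMem_empty, iff_false, not_and]
  intro h1 h2
  obtain ⟨j, -, hj⟩ := (Finset.lcm_eq_zero_iff (f := d) (s := univ)).mp h2
  · simpa [Nat.divisors_zero] using h1 j

lemma DD_one : DD ι 1 = {fun _ => 1} := by
  ext d
  simp only [mem_DD, Finset.mem_singleton, Nat.divisors_one, Finset.mem_singleton]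
  constructor
  · rintro ⟨h1, -⟩; funext j; exact h1 j
  · rintro rfl
    refine ⟨fun j => rfl, Nat.dvd_one.mp (Finset.lcm_dvd fun j _ => dvd_refl 1)⟩

lemma lcm_mul_eq {m n : ℕ} (hmn : Nat.Coprime m n) {a b : ι → ℕ}
    (ha : ∀ j, a j ∣ m) (hb : ∀ j, b j ∣ n) :
    univ.lcm (fun j => a j * b j) = univ.lcm a * univ.lcm b := by
  have hAm : univ.lcm a ∣ m := Finset.lcm_dvd fun j _ => ha j
  have hBn : univ.lcm b ∣ n := Finset.lcm_dvd fun j _ => hb j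
  have hcop : Nat.Coprime (univ.lcm a) (univ.lcm b) :=
    Nat.Coprime.coprime_dvd_right hBn (Nat.Coprime.coprime_dvd_left hAm hmn)
  refine Nat.dvd_antisymm (Finset.lcm_dvd fun j _ => mul_dvd_mul
    (Finset.dvd_lcm (mem_univ j)) (Finset.dvd_lcm (mem_univ j))) ?_
  refine hcop.mul_dvd_of_dvd_of_dvd ?_ ?_
  · exact Finset.lcm_dvd fun j _ =>
      ((dvd_mul_right (a j) (b j)).trans (Finset.dvd_lcm (mem_univ j)))
  · exact Finset.lcm_dvd fun j _ =>
      ((dvd_mul_left (b j) (a j)).trans (Finset.dvd_lcm (mem_univ j)))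

lemma eq_of_dvd_mul_eq {A B m n : ℕ} (hA : A ∣ m) (hB : B ∣ n) (hm : m ≠ 0) (hn : n ≠ 0)
    (h : A * B = m * n) : A = m ∧ B = n := by
  obtain ⟨v, hv⟩ := hB
  have hB0 : B ≠ 0 := fun h0 => hn (by simpa [h0] using hv)
  have hAm : A = m * v := by
    have : A * B = (m * v) * B := by rw [h, hv]; ring
    exact Nat.eq_of_mul_eq_mul_right (Nat.pos_of_ne_zero hB0) this
  have hA' : A = m := Nat.dvd_antisymm hA ⟨v, hAm⟩
  refine ⟨hA', ?_⟩
  subst hA'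
  have hA0 : A ≠ 0 := fun h0 => hm (by simp [h0])
  exact Nat.eq_of_mul_eq_mul_left (Nat.pos_of_ne_zero hA0) h

lemma sum_DD_mul {R : Type*} [CommRing R] {m n : ℕ} (hm : m ≠ 0) (hn : n ≠ 0)
    (hmn : Nat.Coprime m n) (t : ι → ℕ → R)
    (ht : ∀ (j : ι) (a b : ℕ), a ∣ m → b ∣ n → t j (a * b) = t j a * t j b) :
    ∑ d ∈ DD ι (m * n), ∏ j, t j (d j)
      = (∑ a ∈ DD ι m, ∏ j, t j (a j)) * (∑ b ∈ DD ι n, ∏ j, t j (b j)) := by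
  rw [Finset.sum_mul_sum, ← Finset.sum_product']
  refine Finset.sum_nbij' (i := fun d => (fun j => Nat.gcd (d j) m, fun j => Nat.gcd (d j) n))
    (j := fun ab => fun j => ab.1 j * ab.2 j) ?_ ?_ ?_ ?_ ?_
  · -- maps to
    intro d hd
    obtain ⟨h1, h2⟩ := mem_DD.mp hd
    have hdvd : ∀ j, d j ∣ m * n := fun j => (Nat.mem_divisors.mp (h1 j)).1
    have hsplit : ∀ j, Nat.gcd (d j) m * Nat.gcd (d j) n = d j := fun j =>
      (Nat.gcd_mul_gcd_eq_iff_dvd_mul_of_coprime hmn).mpr (hdvd j)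
    have hlcm : univ.lcm (fun j => Nat.gcd (d j) m * Nat.gcd (d j) n)
        = univ.lcm (fun j => Nat.gcd (d j) m) * univ.lcm (fun j => Nat.gcd (d j) n) :=
      lcm_mul_eq hmn (fun j => Nat.gcd_dvd_right _ _) (fun j => Nat.gcd_dvd_right _ _)
    have hd' : univ.lcm (fun j => Nat.gcd (d j) m * Nat.gcd (d j) n) = m * n := by
      rw [show (fun j => Nat.gcd (d j) m * Nat.gcd (d j) n) = d from funext hsplit, h2]
    rw [hd'] at hlcm
    obtain ⟨hA, hB⟩ := eq_of_dvd_mul_eq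
      (Finset.lcm_dvd fun j _ => Nat.gcd_dvd_right _ _)
      (Finset.lcm_dvd fun j _ => Nat.gcd_dvd_right _ _) hm hn hlcm.symm
    refine Finset.mem_product.mpr ⟨mem_DD.mpr ⟨fun j => Nat.mem_divisors.mpr
      ⟨Nat.gcd_dvd_right _ _, hm⟩, hA⟩, mem_DD.mpr ⟨fun j => Nat.mem_divisors.mpr
      ⟨Nat.gcd_dvd_right _ _, hn⟩, hB⟩⟩
  · -- reverse maps to
    rintro ⟨a, b⟩ hab
    obtain ⟨ha, hb⟩ := Finset.mem_product.mp hab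
    obtain ⟨ha1, ha2⟩ := mem_DD.mp ha
    obtain ⟨hb1, hb2⟩ := mem_DD.mp hb
    refine mem_DD.mpr ⟨fun j => Nat.mem_divisors.mpr
      ⟨mul_dvd_mul (Nat.mem_divisors.mp (ha1 j)).1 (Nat.mem_divisors.mp (hb1 j)).1,
        mul_ne_zero hm hn⟩, ?_⟩
    rw [lcm_mul_eq hmn (fun j => (Nat.mem_divisors.mp (ha1 j)).1)
      (fun j => (Nat.mem_divisors.mp (hb1 j)).1), ha2, hb2]
  · -- left inverse
    intro d hd
    obtain ⟨h1, -⟩ := mem_DD.mp hd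
    funext j
    exact (Nat.gcd_mul_gcd_eq_iff_dvd_mul_of_coprime hmn).mpr (Nat.mem_divisors.mp (h1 j)).1
  · -- right inverse
    rintro ⟨a, b⟩ hab
    obtain ⟨ha, hb⟩ := Finset.mem_product.mp hab
    obtain ⟨ha1, -⟩ := mem_DD.mp ha
    obtain ⟨hb1, -⟩ := mem_DD.mp hb
    have key : ∀ j, Nat.gcd (a j * b j) m = a j := by
      intro j
      have hbj : Nat.Coprime (b j) m :=
        (Nat.Coprime.coprime_dvd_left (Nat.mem_divisors.mp (hb1 j)).1 hmn.symm)
      rw [Nat.Coprime.gcd_mul_right_cancel _ hbj,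
        Nat.gcd_eq_left (Nat.mem_divisors.mp (ha1 j)).1]
    have key2 : ∀ j, Nat.gcd (a j * b j) n = b j := by
      intro j
      have haj : Nat.Coprime (a j) n :=
        (Nat.Coprime.coprime_dvd_left (Nat.mem_divisors.mp (ha1 j)).1 hmn)
      rw [Nat.Coprime.gcd_mul_left_cancel _ haj,
        Nat.gcd_eq_left (Nat.mem_divisors.mp (hb1 j)).1]
    exact Prod.ext (funext key) (funext key2)
  · -- values agree
    intro d hd
    obtain ⟨h1, -⟩ := mem_DD.mp hd
    have hsplit : ∀ j, d j = Nat.gcd (d j) m * Nat.gcd (d j) n := fun j =>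
      ((Nat.gcd_mul_gcd_eq_iff_dvd_mul_of_coprime hmn).mpr
        (Nat.mem_divisors.mp (h1 j)).1).symm
    calc ∏ j, t j (d j) = ∏ j, (t j (Nat.gcd (d j) m) * t j (Nat.gcd (d j) n)) := by
          refine Finset.prod_congr rfl fun j _ => ?_
          rw [← ht j _ _ (Nat.gcd_dvd_right _ _) (Nat.gcd_dvd_right _ _), ← hsplit j]
      _ = _ := by rw [Finset.prod_mul_distrib]
lemma sum_DD_prime {R : Type*} [CommRing R] {p : ℕ} (hp : p.Prime) (t : ι → ℕ → R)
    (ht1 : ∀ j, t j 1 = 1) :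
    ∑ d ∈ DD ι p, ∏ j, t j (d j) = (∏ j, (1 + t j p)) - 1 := by
  have htot : ∑ d ∈ Fintype.piFinset (fun _ : ι => p.divisors), ∏ j, t j (d j)
      = ∏ j, (1 + t j p) := by
    rw [← Finset.prod_univ_sum]
    refine Finset.prod_congr rfl fun j _ => ?_
    rw [Nat.Prime.divisors hp, Finset.sum_pair hp.one_lt.ne, ht1]
    
  have hsplit := Finset.sum_filter_add_sum_filter_not
    (Fintype.piFinset (fun _ : ι => p.divisors)) (fun d => univ.lcm d = p)
    (fun d => ∏ j, t j (d j))
  have hone : (Fintype.piFinset (fun _ : ι => p.divisors)).filter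
      (fun d => ¬ univ.lcm d = p) = {fun _ => 1} := by
    ext d
    simp only [Finset.mem_filter, Fintype.mem_piFinset, Finset.mem_singleton]
    constructor
    · rintro ⟨h1, h2⟩
      have hdvd : univ.lcm d ∣ p := Finset.lcm_dvd fun j _ => (Nat.mem_divisors.mp (h1 j)).1
      rcases (Nat.dvd_prime hp).mp hdvd with h | h
      · funext j
        exact Nat.dvd_one.mp (h ▸ Finset.dvd_lcm (mem_univ j))
      · exact absurd h h2
    · rintro rfl
      have : univ.lcm (fun _ : ι => 1) = 1 :=
        Nat.dvd_one.mp (Finset.lcm_dvd fun j _ => dvd_refl 1)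
      refine ⟨fun j => Nat.mem_divisors.mpr ⟨one_dvd _, hp.ne_zero⟩, by
        rw [this]; exact hp.one_lt.ne⟩
  rw [hone] at hsplit
  have : ∑ d ∈ ({fun _ => 1} : Finset (ι → ℕ)), ∏ j, t j (d j) = 1 := by
    rw [Finset.sum_singleton]
    simp [ht1]
  rw [this] at hsplit
  have : DD ι p = (Fintype.piFinset (fun _ : ι => p.divisors)).filter
      (fun d => univ.lcm d = p) := rfl
  rw [this, ← htot, ← hsplit]
  ring
lemma sum_DD_prime_pow {R : Type*} [CommRing R] {p e : ℕ} (hp : p.Prime) (he : 2 ≤ e)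
    (t : ι → ℕ → R) (ht0 : ∀ j x, ¬ Squarefree x → t j x = 0) :
    ∑ d ∈ DD ι (p ^ e), ∏ j, t j (d j) = 0 := by
  refine Finset.sum_eq_zero fun d hd => ?_
  obtain ⟨h1, h2⟩ := mem_DD.mp hd
  by_cases hsf : ∀ j, Squarefree (d j)
  · exfalso
    have hdvd : ∀ j, d j ∣ p := by
      intro j
      obtain ⟨c, hc, hdj⟩ := (Nat.dvd_prime_pow hp).mp (Nat.mem_divisors.mp (h1 j)).1
      rw [hdj]
      have hc1 : c ≤ 1 := by
        by_contra hc2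
        push_neg at hc2
        have : p * p ∣ p ^ c := by
          have : p ^ 2 ∣ p ^ c := pow_dvd_pow p hc2
          simpa [sq] using this
        exact Nat.Prime.one_lt hp |>.ne' (Nat.isUnit_iff.mp ((hdj ▸ hsf j) p this))
      calc p ^ c ∣ p ^ 1 := pow_dvd_pow p hc1
        _ = p := pow_one p
    have : p ^ e ∣ p := h2 ▸ Finset.lcm_dvd fun j _ => hdvd j
    have h1p : p ^ e ∣ p ^ 1 := by simpa using this
    have := (Nat.pow_dvd_pow_iff_le_right hp.one_lt).mp h1p
    omega
  · push_neg at hsf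
    obtain ⟨j, hj⟩ := hsf
    exact Finset.prod_eq_zero (mem_univ j) (ht0 j _ hj)

variable {R : Type*} [NormedField R] [CharZero R]

noncomputable def gg (t : ι → ℕ → R) (n : ℕ) : R := (∑ d ∈ DD ι n, ∏ j, t j (d j)) / n

lemma gg_zero (t : ι → ℕ → R) : gg t 0 = 0 := by simp [gg, DD_zero]

lemma gg_one (t : ι → ℕ → R) (ht1 : ∀ j, t j 1 = 1) : gg t 1 = 1 := by
  simp [gg, DD_one, ht1]

lemma gg_mul (t : ι → ℕ → R)
    (htmul : ∀ (j : ι) (a b : ℕ), Nat.Coprime a b → t j (a * b) = t j a * t j b)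
    (ht1 : ∀ j, t j 1 = 1) {m n : ℕ} (hmn : Nat.Coprime m n) :
    gg t (m * n) = gg t m * gg t n := by
  rcases eq_or_ne m 0 with rfl | hm
  · have : n = 1 := Nat.coprime_zero_left n |>.mp hmn
    subst this
    simp [gg_zero, gg_one t ht1]
  rcases eq_or_ne n 0 with rfl | hn
  · have : m = 1 := Nat.coprime_zero_right m |>.mp hmn
    subst this
    simp [gg_zero, gg_one t ht1]
  have ht : ∀ (j : ι) (a b : ℕ), a ∣ m → b ∣ n → t j (a * b) = t j a * t j b := by
    intro j a b ha hb
    exact htmul j a b (Nat.Coprime.coprime_dvd_left ha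
      (Nat.Coprime.coprime_dvd_right hb hmn))
  rw [gg, gg, gg, sum_DD_mul hm hn hmn t ht, Nat.cast_mul]
  rw [div_mul_div_comm]

lemma gg_prime (t : ι → ℕ → R) {p : ℕ} (hp : p.Prime) (ht1 : ∀ j, t j 1 = 1) :
    gg t p = ((∏ j, (1 + t j p)) - 1) / p := by
  rw [gg, sum_DD_prime hp t ht1]

lemma gg_prime_pow (t : ι → ℕ → R) {p e : ℕ} (hp : p.Prime) (he : 2 ≤ e)
    (ht0 : ∀ j x, ¬ Squarefree x → t j x = 0) : gg t (p ^ e) = 0 := by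
  rw [gg, sum_DD_prime_pow hp he t ht0, zero_div]

lemma tsum_gg_prime_pow [CompleteSpace R] (t : ι → ℕ → R) {p : ℕ} (hp : p.Prime)
    (ht1 : ∀ j, t j 1 = 1) (ht0 : ∀ j x, ¬ Squarefree x → t j x = 0) :
    ∑' e : ℕ, gg t (p ^ e) = 1 + gg t p := by
  rw [tsum_eq_sum (s := {0, 1}) (f := fun e => gg t (p ^ e)) ?_]
  · rw [Finset.sum_pair (by norm_num), pow_zero, pow_one, gg_one t ht1]
  · intro e he
    simp only [Finset.mem_insert, Finset.mem_singleton] at he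
    push_neg at he
    exact gg_prime_pow t hp (by omega) ht0

variable (s : ι → ℂ)

noncomputable def tC (s : ι → ℂ) : ι → ℕ → ℂ :=
  fun j x => (moebius x : ℂ) * (x : ℂ) ^ (-(s j))

noncomputable def tR (s : ι → ℂ) : ι → ℕ → ℝ :=
  fun j x => |(moebius x : ℝ)| * (x : ℝ) ^ (-(s j).re)

lemma tC_one (j : ι) : tC s j 1 = 1 := by
  simp [tC]

lemma tR_one (j : ι) : tR s j 1 = 1 := by
  simp [tR]

lemma tC_mul (j : ι) (a b : ℕ) (hab : Nat.Coprime a b) :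
    tC s j (a * b) = tC s j a * tC s j b := by
  rcases eq_or_ne a 0 with rfl | ha
  · simp [tC]
  rcases eq_or_ne b 0 with rfl | hb
  · simp [tC]
  have hmoeb : (moebius (a * b) : ℤ) = moebius a * moebius b :=
    isMultiplicative_moebius.map_mul_of_coprime hab
  have hcpow : ((a * b : ℕ) : ℂ) ^ (-(s j)) = (a : ℂ) ^ (-(s j)) * (b : ℂ) ^ (-(s j)) := by
    push_cast
    exact Complex.natCast_mul_natCast_cpow a b (-(s j))
  simp only [tC]
  rw [hcpow]
  push_cast [hmoeb]
  ring

lemma tR_mul (j : ι) (a b : ℕ) (hab : Nat.Coprime a b) :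
    tR s j (a * b) = tR s j a * tR s j b := by
  rcases eq_or_ne a 0 with rfl | ha
  · simp [tR]
  rcases eq_or_ne b 0 with rfl | hb
  · simp [tR]
  have hmoeb : (moebius (a * b) : ℤ) = moebius a * moebius b :=
    isMultiplicative_moebius.map_mul_of_coprime hab
  have hrpow : ((a * b : ℕ) : ℝ) ^ (-(s j).re) = (a : ℝ) ^ (-(s j).re) * (b : ℝ) ^ (-(s j).re) := by
    push_cast
    rw [Real.mul_rpow (Nat.cast_nonneg a) (Nat.cast_nonneg b)]
  simp only [tR]
  rw [hrpow]
  push_cast [hmoeb]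
  rw [abs_mul]
  ring

lemma tC_sqfree (j : ι) (x : ℕ) (hx : ¬ Squarefree x) : tC s j x = 0 := by
  simp [tC, moebius_eq_zero_of_not_squarefree hx]

lemma tR_sqfree (j : ι) (x : ℕ) (hx : ¬ Squarefree x) : tR s j x = 0 := by
  simp [tR, moebius_eq_zero_of_not_squarefree hx]

lemma tR_nonneg (j : ι) (x : ℕ) : 0 ≤ tR s j x :=
  mul_nonneg (abs_nonneg _) (Real.rpow_nonneg (Nat.cast_nonneg x) _)

lemma norm_tC (j : ι) {x : ℕ} (hx : 0 < x) : ‖tC s j x‖ = tR s j x := by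
  simp only [tC, tR]
  rw [norm_mul]
  congr 1
  · rw [show ((moebius x : ℤ) : ℂ) = (((moebius x : ℤ) : ℝ) : ℂ) by push_cast; ring,
      Complex.norm_real, Real.norm_eq_abs]
  · rw [Complex.norm_natCast_cpow_of_pos hx, Complex.neg_re]

lemma tC_prime (j : ι) {p : ℕ} (hp : p.Prime) :
    1 + tC s j p = 1 - (p : ℂ) ^ (-(s j)) := by
  simp only [tC]
  rw [moebius_apply_prime hp]
  push_cast
  ring

lemma tR_prime (j : ι) {p : ℕ} (hp : p.Prime) :
    tR s j p = (p : ℝ) ^ (-(s j).re) := by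
  simp only [tR]
  rw [moebius_apply_prime hp]
  norm_num
end

lemma prod_one_add_le {ι : Type*} [DecidableEq ι] (u : Finset ι) (x : ι → ℝ)
    (h0 : ∀ i ∈ u, 0 ≤ x i) (h1 : ∀ i ∈ u, x i ≤ 1) :
    ∏ i ∈ u, (1 + x i) ≤ 1 + 2 ^ u.card * ∑ i ∈ u, x i := by
  induction u using Finset.induction_on with
  | empty => simp
  | @insert a u ha ih =>
    rw [Finset.prod_insert ha, Finset.sum_insert ha, Finset.card_insert_of_notMem ha]
    have ihu := ih (fun i hi => h0 i (Finset.mem_insert_of_mem hi))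
      (fun i hi => h1 i (Finset.mem_insert_of_mem hi))
    have hxa0 : 0 ≤ x a := h0 a (Finset.mem_insert_self a u)
    have hxa1 : x a ≤ 1 := h1 a (Finset.mem_insert_self a u)
    have hsum0 : 0 ≤ ∑ i ∈ u, x i := Finset.sum_nonneg fun i hi => h0 i (Finset.mem_insert_of_mem hi)
    have hpow1 : (1 : ℝ) ≤ 2 ^ u.card := one_le_pow₀ (by norm_num)
    have hprod0 : 0 ≤ ∏ i ∈ u, (1 + x i) := Finset.prod_nonneg fun i hi =>
      by linarith [h0 i (Finset.mem_insert_of_mem hi)]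
    rw [pow_succ]
    nlinarith [mul_le_mul_of_nonneg_left ihu (by linarith : (0:ℝ) ≤ 1 + x a),
      mul_nonneg (mul_nonneg (by linarith : (0:ℝ) ≤ 1 - x a) (by linarith : (0:ℝ) ≤ (2:ℝ) ^ u.card)) hsum0,
      mul_nonneg hxa0 (by linarith : (0:ℝ) ≤ 2 * (2:ℝ) ^ u.card - 1)]

lemma summable_rpow_div {c : ℝ} (hc : 0 < c) :
    Summable (fun n : ℕ => (n : ℝ) ^ (-c) / n) := by
  have : (fun n : ℕ => (n : ℝ) ^ (-c) / n) = fun n : ℕ => (n : ℝ) ^ (-c - 1) := by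
    funext n
    rcases eq_or_ne n 0 with rfl | hn
    · simp [Real.zero_rpow (by linarith : -c - 1 ≠ 0), Real.zero_rpow (by linarith : -c ≠ 0)]
    · have hn0 : (0 : ℝ) < n := by positivity
      rw [show -c - 1 = -c + (-1) by ring, Real.rpow_add hn0, Real.rpow_neg_one]
      ring
  rw [this]
  exact Real.summable_nat_rpow.mpr (by linarith)

section
variable {ι : Type*} [Fintype ι] [DecidableEq ι] (s : ι → ℂ)

noncomputable def bfun (s : ι → ℂ) : ℕ → ℝ :=
  fun n => 2 ^ (Fintype.card ι) * ∑ j, (n : ℝ) ^ (-(s j).re) / n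

lemma bfun_nonneg (n : ℕ) : 0 ≤ bfun s n :=
  mul_nonneg (by positivity) (Finset.sum_nonneg fun j _ =>
    div_nonneg (Real.rpow_nonneg (Nat.cast_nonneg n) _) (Nat.cast_nonneg n))

lemma summable_bfun (hs : ∀ j, 0 < (s j).re) : Summable (bfun s) :=
  Summable.mul_left _ (summable_sum fun j _ => summable_rpow_div (hs j))

lemma gR_nonneg (n : ℕ) : 0 ≤ gg (tR s) n :=
  div_nonneg (Finset.sum_nonneg fun d _ => Finset.prod_nonneg fun j _ => tR_nonneg s j _)
    (Nat.cast_nonneg n)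

lemma gR_prime_le (hs : ∀ j, 0 < (s j).re) {p : ℕ} (hp : p.Prime) :
    gg (tR s) p ≤ bfun s p := by
  rw [gg_prime (tR s) hp (tR_one s)]
  have hp0 : (0:ℝ) < p := by exact_mod_cast hp.pos
  have hple : (1 : ℝ) ≤ (p : ℝ) := by exact_mod_cast hp.one_lt.le
  have hbd : ∏ j, (1 + tR s j p) ≤ 1 + 2 ^ (Fintype.card ι) * ∑ j, tR s j p := by
    have h := prod_one_add_le Finset.univ (fun j => tR s j p)
      (fun j _ => tR_nonneg s j p)
      (fun j _ => by
        show tR s j p ≤ 1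
        rw [tR_prime s j hp]
        exact Real.rpow_le_one_of_one_le_of_nonpos hple (by linarith [hs j]))
    simpa [Finset.card_univ] using h
  calc (∏ j, (1 + tR s j p) - 1) / (p : ℝ)
      ≤ (2 ^ (Fintype.card ι) * ∑ j, tR s j p) / p := by
        gcongr
        linarith
    _ = bfun s p := by
        rw [mul_div_assoc, Finset.sum_div, bfun]
        congr 1
        refine Finset.sum_congr rfl fun j _ => ?_
        rw [tR_prime s j hp]

lemma summable_gR (hs : ∀ j, 0 < (s j).re) : Summable (gg (tR s)) := by
  have h1 : gg (tR s) 1 = 1 := gg_one _ (tR_one s)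
  have hmul : ∀ {m n : ℕ}, Nat.Coprime m n → gg (tR s) (m * n) = gg (tR s) m * gg (tR s) n :=
    fun {m n} h => gg_mul _ (tR_mul s) (tR_one s) h
  have hps : ∀ {p : ℕ}, p.Prime → Summable (fun e : ℕ => ‖gg (tR s) (p ^ e)‖) := by
    intro p hp
    refine summable_of_ne_finset_zero (s := ({0, 1} : Finset ℕ)) fun e he => ?_
    simp only [Finset.mem_insert, Finset.mem_singleton] at he
    push_neg at he
    rw [gg_prime_pow _ hp (by omega) (tR_sqfree s), norm_zero]
  set B := ∑' n, bfun s n with hB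
  refine summable_of_sum_range_le (c := Real.exp B) (gR_nonneg s) fun N => ?_
  obtain ⟨hsm, hhs⟩ := EulerProduct.summable_and_hasSum_smoothNumbers_prod_primesBelow_tsum
    (f := gg (tR s)) h1 hmul hps N
  have hsub : Summable (fun m : N.smoothNumbers => gg (tR s) (m : ℕ)) := hhs.summable
  have hind : Summable (Set.indicator N.smoothNumbers (gg (tR s))) := by
    exact summable_subtype_iff_indicator.mp hsub
  calc ∑ n ∈ Finset.range N, gg (tR s) n
      ≤ ∑ n ∈ Finset.range N, Set.indicator N.smoothNumbers (gg (tR s)) n := by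
        refine Finset.sum_le_sum fun n hn => ?_
        by_cases hsm' : n ∈ N.smoothNumbers
        · rw [Set.indicator_of_mem hsm']
        · rw [Set.indicator_of_notMem hsm']
          have hn0 : n = 0 := by
            by_contra h0
            refine hsm' (Nat.mem_smoothNumbers.mpr ⟨h0, fun p hp => ?_⟩)
            have hpn : p ∣ n := Nat.dvd_of_mem_primeFactorsList hp
            have : p ≤ n := Nat.le_of_dvd (Nat.pos_of_ne_zero h0) hpn
            exact lt_of_le_of_lt this (Finset.mem_range.mp hn)
          rw [hn0, gg_zero]
    _ ≤ ∑' n, Set.indicator N.smoothNumbers (gg (tR s)) n := by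
        refine Summable.sum_le_tsum _ (fun i _ => Set.indicator_nonneg (fun a _ => gR_nonneg s a) i) hind
    _ = ∑' m : N.smoothNumbers, gg (tR s) (m : ℕ) := (_root_.tsum_subtype _ _).symm
    _ = ∏ p ∈ N.primesBelow, ∑' e : ℕ, gg (tR s) (p ^ e) := hhs.tsum_eq
    _ = ∏ p ∈ N.primesBelow, (1 + gg (tR s) p) := by
        refine Finset.prod_congr rfl fun p hp => ?_
        exact tsum_gg_prime_pow _ (Nat.prime_of_mem_primesBelow hp) (tR_one s) (tR_sqfree s)
    _ ≤ ∏ p ∈ N.primesBelow, Real.exp (gg (tR s) p) := by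
        refine Finset.prod_le_prod (fun p _ => by linarith [gR_nonneg s p]) fun p _ => ?_
        linarith [Real.add_one_le_exp (gg (tR s) p)]
    _ = Real.exp (∑ p ∈ N.primesBelow, gg (tR s) p) := (Real.exp_sum _ _).symm
    _ ≤ Real.exp B := by
        rw [Real.exp_le_exp]
        calc ∑ p ∈ N.primesBelow, gg (tR s) p
            ≤ ∑ p ∈ N.primesBelow, bfun s p := Finset.sum_le_sum fun p hp =>
              gR_prime_le s hs (Nat.prime_of_mem_primesBelow hp)
          _ ≤ B := Summable.sum_le_tsum _ (fun i _ => bfun_nonneg s i) (summable_bfun s hs)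

end

section
variable {ι : Type*} [Fintype ι] [DecidableEq ι] (s : ι → ℂ)

noncomputable def EF (s : ι → ℂ) (p : ℕ) : ℂ :=
  1 - 1 / (p : ℂ) + 1 / (p : ℂ) * ∏ j, (1 - (p : ℂ) ^ (-(s j)))

lemma norm_gC_le (n : ℕ) : ‖gg (tC s) n‖ ≤ gg (tR s) n := by
  rcases eq_or_ne n 0 with rfl | hn
  · rw [gg_zero, gg_zero, norm_zero]
  rw [gg, gg, norm_div, Complex.norm_natCast]
  gcongr
  calc ‖∑ d ∈ DD ι n, ∏ j, tC s j (d j)‖ ≤ ∑ d ∈ DD ι n, ‖∏ j, tC s j (d j)‖ :=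
        norm_sum_le _ _
    _ = ∑ d ∈ DD ι n, ∏ j, tR s j (d j) := by
        refine Finset.sum_congr rfl fun d hd => ?_
        rw [norm_prod]
        refine Finset.prod_congr rfl fun j _ => ?_
        exact norm_tC s j (Nat.pos_of_mem_divisors ((mem_DD.mp hd).1 j))

lemma summable_norm_gC (hs : ∀ j, 0 < (s j).re) : Summable (fun n => ‖gg (tC s) n‖) :=
  Summable.of_nonneg_of_le (fun n => norm_nonneg _) (norm_gC_le s) (summable_gR s hs)

lemma one_add_gC_prime {p : ℕ} (hp : p.Prime) : 1 + gg (tC s) p = EF s p := by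
  rw [gg_prime _ hp (tC_one s), EF]
  have hprod : ∏ j, (1 + tC s j p) = ∏ j, (1 - (p : ℂ) ^ (-(s j))) :=
    Finset.prod_congr rfl fun j _ => tC_prime s j hp
  rw [hprod]
  have hp0 : (p : ℂ) ≠ 0 := Nat.cast_ne_zero.mpr hp.ne_zero
  field_simp
  ring

lemma tsum_gC_prime_pow {p : ℕ} (hp : p.Prime) :
    ∑' e : ℕ, gg (tC s) (p ^ e) = EF s p := by
  rw [tsum_gg_prime_pow _ hp (tC_one s) (tC_sqfree s), one_add_gC_prime s hp]

lemma hasProd_EF (hs : ∀ j, 0 < (s j).re) :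
    HasProd (fun p : Nat.Primes => EF s (p : ℕ)) (∑' n, gg (tC s) n) := by
  have h := EulerProduct.eulerProduct_hasProd (f := gg (tC s)) (gg_one _ (tC_one s))
    (fun {m n} h => gg_mul _ (tC_mul s) (tC_one s) h) (summable_norm_gC s hs) (gg_zero _)
  have hfun : (fun p : Nat.Primes => ∑' e : ℕ, gg (tC s) ((p : ℕ) ^ e))
      = fun p : Nat.Primes => EF s (p : ℕ) :=
    funext fun p => tsum_gC_prime_pow s p.prop
  rwa [hfun] at h

end

section
variable {ι : Type*} [Fintype ι] [DecidableEq ι] (s : ι → ℂ)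

def LL (d : ι → ℕ+) : ℕ := Finset.univ.lcm fun j => (d j : ℕ)

noncomputable def FF (s : ι → ℂ) (d : ι → ℕ+) : ℂ :=
  (∏ j, (moebius (d j : ℕ) : ℂ)) / ((LL d : ℂ) * ∏ j, ((d j : ℕ) : ℂ) ^ (s j))

lemma LL_ne_zero (d : ι → ℕ+) : LL d ≠ 0 := by
  intro h
  obtain ⟨j, -, hj⟩ := (Finset.lcm_eq_zero_iff).mp h
  exact (d j).ne_zero hj

lemma dvd_LL (d : ι → ℕ+) (j : ι) : (d j : ℕ) ∣ LL d := Finset.dvd_lcm (mem_univ j)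

lemma FF_eq (d : ι → ℕ+) : FF s d = (∏ j, tC s j (d j : ℕ)) / (LL d : ℂ) := by
  have : ∏ j, tC s j (d j : ℕ)
      = (∏ j, (moebius (d j : ℕ) : ℂ)) * (∏ j, ((d j : ℕ) : ℂ) ^ (s j))⁻¹ := by
    rw [← Finset.prod_inv_distrib, ← Finset.prod_mul_distrib]
    refine Finset.prod_congr rfl fun j _ => ?_
    rw [tC, Complex.cpow_neg]
  rw [this, FF, div_eq_mul_inv, div_eq_mul_inv, mul_inv]
  ring

lemma norm_FF (d : ι → ℕ+) : ‖FF s d‖ = (∏ j, tR s j (d j : ℕ)) / (LL d : ℝ) := by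
  rw [FF_eq, norm_div, Complex.norm_natCast, norm_prod]
  congr 1
  exact Finset.prod_congr rfl fun j _ => norm_tC s j (d j).pos

lemma mem_DD_of_LL {n : ℕ} {d : ι → ℕ+} (h : LL d = n) :
    (fun j => (d j : ℕ)) ∈ DD ι n :=
  mem_DD.mpr ⟨fun j => Nat.mem_divisors.mpr ⟨h ▸ dvd_LL d j, h ▸ LL_ne_zero d⟩, h⟩

lemma sum_fiber_le (n : ℕ) (A : Finset (ι → ℕ+)) (hA : ∀ d ∈ A, LL d = n) :
    ∑ d ∈ A, ‖FF s d‖ ≤ gg (tR s) n := by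
  rcases A.eq_empty_or_nonempty with rfl | ⟨d0, hd0⟩
  · simpa using gR_nonneg s n
  have hn : n ≠ 0 := (hA d0 hd0) ▸ LL_ne_zero d0
  have hinj : Set.InjOn (fun (d : ι → ℕ+) => fun j => (d j : ℕ)) A := by
    intro a _ b _ hab
    funext j
    exact PNat.coe_injective (congrFun hab j)
  calc ∑ d ∈ A, ‖FF s d‖
      = ∑ d ∈ A, (∏ j, tR s j (d j : ℕ)) / (n : ℝ) := by
        refine Finset.sum_congr rfl fun d hd => ?_
        rw [norm_FF, hA d hd]
    _ = ∑ d' ∈ A.image (fun (d : ι → ℕ+) => fun j => (d j : ℕ)),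
          (∏ j, tR s j (d' j)) / (n : ℝ) := by
        rw [Finset.sum_image (fun a ha b hb h => hinj ha hb h)]
    _ ≤ ∑ d' ∈ DD ι n, (∏ j, tR s j (d' j)) / (n : ℝ) := by
        refine Finset.sum_le_sum_of_subset_of_nonneg ?_ fun d' _ _ => ?_
        · intro d' hd'
          obtain ⟨d, hd, rfl⟩ := Finset.mem_image.mp hd'
          exact mem_DD_of_LL (hA d hd)
        · exact div_nonneg (Finset.prod_nonneg fun j _ => tR_nonneg s j _) (Nat.cast_nonneg n)
    _ = gg (tR s) n := by rw [gg, Finset.sum_div]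

lemma summable_norm_FF (hs : ∀ j, 0 < (s j).re) : Summable (fun d => ‖FF s d‖) := by
  refine summable_of_sum_le (c := ∑' n, gg (tR s) n) (fun d => norm_nonneg _) fun A => ?_
  rw [← Finset.sum_fiberwise_of_maps_to (g := LL)
    (fun d hd => Finset.mem_image_of_mem LL hd) (fun d => ‖FF s d‖)]
  calc ∑ n ∈ A.image LL, ∑ d ∈ A.filter (fun d => LL d = n), ‖FF s d‖
      ≤ ∑ n ∈ A.image LL, gg (tR s) n := by
        refine Finset.sum_le_sum fun n _ => ?_
        exact sum_fiber_le s n _ (fun d hd => (Finset.mem_filter.mp hd).2)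
    _ ≤ ∑' n, gg (tR s) n :=
        Summable.sum_le_tsum _ (fun i _ => gR_nonneg s i) (summable_gR s hs)

lemma fiber_tsum (hs : ∀ j, 0 < (s j).re) (n : ℕ) :
    ∑' (d : (LL ⁻¹' {n} : Set (ι → ℕ+))), FF s d = gg (tC s) n := by
  rcases eq_or_ne n 0 with rfl | hn
  · haveI : IsEmpty (LL ⁻¹' {0} : Set (ι → ℕ+)) :=
      ⟨fun x => LL_ne_zero x.1 (Set.mem_singleton_iff.mp x.2)⟩
    rw [tsum_empty, gg_zero]
  · have hfin : (LL ⁻¹' {n} : Set (ι → ℕ+)).Finite := by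
      refine Set.Finite.of_finite_image (f := fun (d : ι → ℕ+) => fun j => (d j : ℕ)) ?_ ?_
      · refine Set.Finite.subset (DD ι n).finite_toSet ?_
        rintro x ⟨d, hd, rfl⟩
        exact mem_DD_of_LL hd
      · intro a _ b _ hab
        funext j
        exact PNat.coe_injective (congrFun hab j)
    rw [show (LL ⁻¹' {n} : Set (ι → ℕ+)) = ↑hfin.toFinset from hfin.coe_toFinset.symm,
      Finset.tsum_subtype']
    rw [gg, Finset.sum_div]
    refine Finset.sum_nbij' (i := fun (d : ι → ℕ+) => fun j => (d j : ℕ))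
      (j := fun (d' : ι → ℕ) => fun j => (d' j).toPNat') ?_ ?_ ?_ ?_ ?_
    · intro d hd
      exact mem_DD_of_LL (hfin.mem_toFinset.mp hd)
    · intro d' hd'
      obtain ⟨h1, h2⟩ := mem_DD.mp hd'
      refine hfin.mem_toFinset.mpr ?_
      show LL _ = n
      rw [← h2, LL]
      congr 1
      funext j
      exact PNat.toPNat'_coe (Nat.pos_of_mem_divisors (h1 j))
    · intro d hd
      funext j
      exact PNat.coe_injective (PNat.toPNat'_coe (d j).pos)
    · intro d' hd'
      obtain ⟨h1, -⟩ := mem_DD.mp hd'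
      funext j
      exact PNat.toPNat'_coe (Nat.pos_of_mem_divisors (h1 j))
    · intro d hd
      rw [FF_eq, hfin.mem_toFinset.mp hd]

lemma tsum_FF (hs : ∀ j, 0 < (s j).re) : ∑' d, FF s d = ∑' n, gg (tC s) n := by
  have hsF : Summable (FF s) := (summable_norm_FF s hs).of_norm
  have hSig : Summable (fun x : (Σ n : ℕ, (LL ⁻¹' {n} : Set (ι → ℕ+))) => FF s x.2) :=
    ((Equiv.sigmaFiberEquiv LL).summable_iff).mpr hsF
  calc ∑' d, FF s d = ∑' x : (Σ n : ℕ, (LL ⁻¹' {n} : Set (ι → ℕ+))), FF s x.2 :=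
        ((Equiv.sigmaFiberEquiv LL).tsum_eq (FF s)).symm
    _ = ∑' n, ∑' (d : (LL ⁻¹' {n} : Set (ι → ℕ+))), FF s d := hSig.tsum_sigma
    _ = ∑' n, gg (tC s) n := tsum_congr fun n => fiber_tsum s hs n

end

end Stmt2Aux

open ArithmeticFunction

/-- The Euler factor `1 − 1/p + (1/p) ∏_{j=1}^{2k} (1 − p^{−s_j})`. -/
noncomputable def eulerFactor (k : ℕ) (s : Fin (2 * k) → ℂ) (p : ℕ) : ℂ :=
  1 - 1 / (p : ℂ) + 1 / (p : ℂ) * ∏ j, (1 - (p : ℂ) ^ (-(s j)))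

theorem stmt2 (k : ℕ) (hk : 1 ≤ k) (s : Fin (2 * k) → ℂ) (hs : ∀ j, 0 < (s j).re) :
    Summable (fun p : Nat.Primes => ‖eulerFactor k s p - 1‖) ∧
    Multipliable (fun p : Nat.Primes => eulerFactor k s p) ∧
    (∑' d : Fin (2 * k) → ℕ+,
        (∏ j, (moebius (d j : ℕ) : ℂ)) /
          (((Finset.univ.lcm fun j => (d j : ℕ) : ℕ) : ℂ) * ∏ j, ((d j : ℕ) : ℂ) ^ (s j)))
      = ∏' p : Nat.Primes, eulerFactor k s p := by
  have hEF : ∀ p : ℕ, eulerFactor k s p = Stmt2Aux.EF s p := fun p => rfl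
  have h' : HasProd (fun p : Nat.Primes => eulerFactor k s (p : ℕ))
      (∑' n, Stmt2Aux.gg (Stmt2Aux.tC s) n) := by
    have h := Stmt2Aux.hasProd_EF s hs
    simpa [hEF] using h
  refine ⟨?_, h'.multipliable, ?_⟩
  · have h1 : ∀ p : Nat.Primes, eulerFactor k s (p : ℕ) - 1
        = Stmt2Aux.gg (Stmt2Aux.tC s) (p : ℕ) := by
      intro p
      rw [hEF, ← Stmt2Aux.one_add_gC_prime s p.prop]
      ring
    have h2 : Summable (fun p : Nat.Primes => ‖Stmt2Aux.gg (Stmt2Aux.tC s) (p : ℕ)‖) :=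
      (Stmt2Aux.summable_norm_gC s hs).comp_injective Subtype.val_injective
    refine h2.congr fun p => ?_
    rw [h1 p]
  · rw [h'.tprod_eq, ← Stmt2Aux.tsum_FF s hs]
    rfl
end

section
/- For every nonzero real t, the Euler products G₁(t) = ∏_p w_p(t) and G₂(t) = G(it, it, −it, −it) converge absolutely, and both G₁(t) and G₂(t) are real and strictly positive. -/
open Complex

/-- The local factor `w_p(t)` at a prime `p`. -/
noncomputable def wfac (p : ℕ) (t : ℝ) : ℂ :=
  (1 - 1 / (p : ℂ) + 1 / (p : ℂ) *
      ((1 - (p : ℂ) ^ (-((t : ℂ) * I))) * (1 - (p : ℂ) ^ ((t : ℂ) * I)))) *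
    (1 - (p : ℂ) ^ (-1 - (t : ℂ) * I))⁻¹ * (1 - (p : ℂ) ^ (-1 + (t : ℂ) * I))⁻¹ *
    (1 - 1 / (p : ℂ))

/-- `G₁(t) = ∏_p w_p(t)`, the product over all primes. -/
noncomputable def G1 (t : ℝ) : ℂ := ∏' p : Nat.Primes, wfac p t

/-- The local factor `W_p(s)` at a prime `p`. -/
noncomputable def Wfac (p : ℕ) (s1 s2 s3 s4 : ℂ) : ℂ :=
  (1 - 1 / (p : ℂ) + 1 / (p : ℂ) *
      ((1 - (p : ℂ) ^ (-s1)) * (1 - (p : ℂ) ^ (-s2)) * (1 - (p : ℂ) ^ (-s3)) *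
        (1 - (p : ℂ) ^ (-s4)))) *
    ((1 - (p : ℂ) ^ (-1 - s1))⁻¹ * (1 - (p : ℂ) ^ (-1 - s2))⁻¹ *
      (1 - (p : ℂ) ^ (-1 - s3))⁻¹ * (1 - (p : ℂ) ^ (-1 - s4))⁻¹) *
    ((1 - (p : ℂ) ^ (-1 - s1 - s2 - s3))⁻¹ * (1 - (p : ℂ) ^ (-1 - s1 - s2 - s4))⁻¹ *
      (1 - (p : ℂ) ^ (-1 - s1 - s3 - s4))⁻¹ * (1 - (p : ℂ) ^ (-1 - s2 - s3 - s4))⁻¹) *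
    ((1 - (p : ℂ) ^ (-1 - s1 - s2)) * (1 - (p : ℂ) ^ (-1 - s1 - s3)) *
      (1 - (p : ℂ) ^ (-1 - s1 - s4)) * (1 - (p : ℂ) ^ (-1 - s2 - s3)) *
      (1 - (p : ℂ) ^ (-1 - s2 - s4)) * (1 - (p : ℂ) ^ (-1 - s3 - s4))) *
    (1 - (p : ℂ) ^ (-1 - s1 - s2 - s3 - s4))

/-- `G(s) = ∏_p W_p(s)`, the product over all primes. -/
noncomputable def Gfun (s1 s2 s3 s4 : ℂ) : ℂ :=
  ∏' p : Nat.Primes, Wfac p s1 s2 s3 s4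

/-- `G₂(t) = G(it, it, −it, −it)`. -/
noncomputable def G2 (t : ℝ) : ℂ :=
  Gfun ((t : ℂ) * I) ((t : ℂ) * I) (-((t : ℂ) * I)) (-((t : ℂ) * I))

set_option maxHeartbeats 1000000

lemma rpos1 (A x : ℝ) (hA0 : 0 ≤ A) (hx0 : 0 < x) (hx2 : x ≤ 1/2) :
    0 < (1 - x + A*x) * ((1-x)^2 + A*x)⁻¹ * (1-x) := by
  have h1 : 0 < 1 - x + A*x := by nlinarith
  have h2 : 0 < (1-x)^2 + A*x := by nlinarith
  have h3 : 0 < 1 - x := by linarith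
  positivity

lemma rbound1 (A x : ℝ) (hA0 : 0 ≤ A) (hA4 : A ≤ 4) (hx0 : 0 < x) (hx2 : x ≤ 1/2) :
    |(1 - x + A*x) * ((1-x)^2 + A*x)⁻¹ * (1-x) - 1| ≤ 16 * x^2 := by
  set B := (1-x)^2 + A*x with hBdef
  have hB : 0 < B := by rw [hBdef]; nlinarith
  have hBq : (1:ℝ)/4 ≤ B := by rw [hBdef]; nlinarith
  have hBi : B⁻¹ ≤ 4 := by
    have := inv_anti₀ (by norm_num : (0:ℝ) < 1/4) hBq
    simpa using this
  have hBi0 : 0 ≤ B⁻¹ := inv_nonneg.mpr hB.le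
  have hBB : B * B⁻¹ = 1 := mul_inv_cancel₀ hB.ne'
  have h1 : (1 - x + A*x) * B⁻¹ * (1-x) - 1 = -(A*x^2) * B⁻¹ := by
    linear_combination hBB
  rw [h1, neg_mul, abs_neg, _root_.abs_of_nonneg (by positivity)]
  calc A*x^2*B⁻¹ ≤ 4*x^2*4 := by gcongr <;> positivity
    _ = 16*x^2 := by ring
lemma rbound2 (A x : ℝ) (hA0 : 0 ≤ A) (hA4 : A ≤ 4) (hx0 : 0 < x) (hx2 : x ≤ 1/2) :
    |(1 - x + A^2*x) * (((1-x)^2 + A*x)⁻¹)^4 * (1 - (A^2-4*A+2)*x + x^2) * (1-x)^5 - 1|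
      ≤ 1256512 * x^2 := by
  set B := (1-x)^2 + A*x with hBdef
  have hB : 0 < B := by rw [hBdef]; nlinarith
  have hBq : (1:ℝ)/4 ≤ B := by rw [hBdef]; nlinarith
  have hBi : B⁻¹ ≤ 4 := by
    have := inv_anti₀ (by norm_num : (0:ℝ) < 1/4) hBq
    simpa using this
  have hBi0 : 0 ≤ B⁻¹ := inv_nonneg.mpr hB.le
  have hB4 : B^4 * (B⁻¹)^4 = 1 := by
    rw [← mul_pow, mul_inv_cancel₀ hB.ne', one_pow]
  set R : ℝ := (-7)*A^2 + (30)*A^2*x^1 + (-51)*A^2*x^2 + (44)*A^2*x^3 + (-21)*A^2*x^4 + (6)*A^2*x^5 + (-1)*A^2*x^6 + (4)*A^3 + (-24)*A^3*x^1 + (48)*A^3*x^2 + (-44)*A^3*x^3 + (20)*A^3*x^4 + (-4)*A^3*x^5 + (-1)*A^4 + (5)*A^4*x^1 + (-11)*A^4*x^2 + (10)*A^4*x^3 + (-5)*A^4*x^4 + (1)*A^4*x^5 with hRdef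
  have h1 : (1 - x + A^2*x) * (B⁻¹)^4 * (1 - (A^2-4*A+2)*x + x^2) * (1-x)^5 - 1
      = (x^2 * R) * (B⁻¹)^4 := by
    rw [hRdef, hBdef]
    linear_combination hB4
  have hm : ∀ i j : ℕ, 0 ≤ A^i*x^j := fun i j =>
    mul_nonneg (pow_nonneg hA0 i) (pow_nonneg hx0.le j)
  have mono : ∀ i j : ℕ, A^i*x^j ≤ 4^i*(1/2)^j := fun i j =>
    mul_le_mul (pow_le_pow_left₀ hA0 hA4 i) (pow_le_pow_left₀ hx0.le hx2 j)
      (pow_nonneg hx0.le j) (pow_nonneg (by norm_num) i)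
  have hR : |R| ≤ 19633/4 := by
    rw [abs_le, hRdef]
    constructor
    · linarith [hm 2 0, mono 2 0, hm 2 1, mono 2 1, hm 2 2, mono 2 2, hm 2 3, mono 2 3, hm 2 4, mono 2 4, hm 2 5, mono 2 5, hm 2 6, mono 2 6, hm 3 0, mono 3 0, hm 3 1, mono 3 1, hm 3 2, mono 3 2, hm 3 3, mono 3 3, hm 3 4, mono 3 4, hm 3 5, mono 3 5, hm 4 0, mono 4 0, hm 4 1, mono 4 1, hm 4 2, mono 4 2, hm 4 3, mono 4 3, hm 4 4, mono 4 4, hm 4 5, mono 4 5]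
    · linarith [hm 2 0, mono 2 0, hm 2 1, mono 2 1, hm 2 2, mono 2 2, hm 2 3, mono 2 3, hm 2 4, mono 2 4, hm 2 5, mono 2 5, hm 2 6, mono 2 6, hm 3 0, mono 3 0, hm 3 1, mono 3 1, hm 3 2, mono 3 2, hm 3 3, mono 3 3, hm 3 4, mono 3 4, hm 3 5, mono 3 5, hm 4 0, mono 4 0, hm 4 1, mono 4 1, hm 4 2, mono 4 2, hm 4 3, mono 4 3, hm 4 4, mono 4 4, hm 4 5, mono 4 5]
  have hBp : (B⁻¹)^4 ≤ 256 := by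
    calc (B⁻¹)^4 ≤ 4^4 := pow_le_pow_left₀ hBi0 hBi 4
      _ = 256 := by norm_num
  rw [h1, abs_mul, abs_mul, _root_.abs_of_nonneg (pow_nonneg hx0.le 2),
    _root_.abs_of_nonneg (pow_nonneg hBi0 4)]
  calc x^2 * |R| * (B⁻¹)^4 ≤ x^2 * (19633/4) * 256 := by
        gcongr
    _ = 1256512 * x^2 := by ring

lemma rpos2 (A x : ℝ) (hA0 : 0 ≤ A) (hA4 : A ≤ 4) (hx0 : 0 < x) (hx2 : x ≤ 1/2) :
    0 < (1 - x + A^2*x) * (((1-x)^2 + A*x)⁻¹)^4 * (1 - (A^2-4*A+2)*x + x^2) * (1-x)^5 := by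
  have h1 : 0 < 1 - x + A^2*x := by nlinarith [sq_nonneg A]
  have h2 : 0 < (1-x)^2 + A*x := by nlinarith
  have h3 : 0 < 1 - x := by linarith
  have h4 : 0 < 1 - (A^2-4*A+2)*x + x^2 := by nlinarith [mul_nonneg hA0 (by linarith : (0:ℝ) ≤ 4 - A), sq_nonneg (1-x)]
  positivity

noncomputable def Aq (p : ℕ) (t : ℝ) : ℝ := Complex.normSq (1 - (p:ℂ)^((t:ℂ)*I))

lemma prime_facts (p : ℕ) (hp : p.Prime) (t : ℝ) :
    (p:ℂ) ≠ 0 ∧ (p:ℂ)^((t:ℂ)*I) ≠ 0 ∧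
      ((p:ℂ)^((t:ℂ)*I)) * ((p:ℂ)^((t:ℂ)*I))⁻¹ = 1 ∧
      (1 - ((p:ℂ)^((t:ℂ)*I))⁻¹) * (1 - (p:ℂ)^((t:ℂ)*I)) = ((Aq p t : ℝ) : ℂ) := by
  have hp0 : (0:ℝ) < p := by exact_mod_cast hp.pos
  have hpc : (p:ℂ) ≠ 0 := by exact_mod_cast hp.pos.ne'
  set z := (p:ℂ)^((t:ℂ)*I) with hz
  have habs : ‖z‖ = 1 := by
    rw [hz, show ((p:ℕ):ℂ) = ((p:ℝ):ℂ) by push_cast; ring,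
      Complex.norm_cpow_eq_rpow_re_of_pos hp0]
    simp
  have hz0 : z ≠ 0 := by
    intro h; rw [h] at habs; simp at habs
  have hconj : (starRingEnd ℂ) (1 - z) = 1 - z⁻¹ := by
    rw [map_sub, map_one, ← Complex.inv_eq_conj habs]
  refine ⟨hpc, hz0, mul_inv_cancel₀ hz0, ?_⟩
  rw [Aq, ← hz, ← hconj, mul_comm, Complex.mul_conj]

lemma wfac_eq (p : ℕ) (hp : p.Prime) (t : ℝ) :
    wfac p t = ((((1 - (p:ℝ)⁻¹ + Aq p t * (p:ℝ)⁻¹) *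
      ((1 - (p:ℝ)⁻¹)^2 + Aq p t * (p:ℝ)⁻¹)⁻¹ * (1 - (p:ℝ)⁻¹) : ℝ)) : ℂ) := by
  obtain ⟨hpc, hz0, hzz, hA⟩ := prime_facts p hp t
  set z := (p:ℂ)^((t:ℂ)*I) with hz
  have e1 : (p:ℂ)^(-((t:ℂ)*I)) = z⁻¹ := by rw [hz, Complex.cpow_neg]
  have e3 : (p:ℂ)^(-1 - (t:ℂ)*I) = (p:ℂ)⁻¹ * z⁻¹ := by
    rw [show (-1 - (t:ℂ)*I) = (-1 : ℂ) + (-((t:ℂ)*I)) by ring,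
      Complex.cpow_add _ _ hpc, Complex.cpow_neg_one, Complex.cpow_neg, hz]
  have e4 : (p:ℂ)^(-1 + (t:ℂ)*I) = (p:ℂ)⁻¹ * z := by
    rw [Complex.cpow_add _ _ hpc, Complex.cpow_neg_one, hz]
  have hBc : (1 - (p:ℂ)⁻¹*z⁻¹) * (1 - (p:ℂ)⁻¹*z)
      = (1 - (p:ℂ)⁻¹)^2 + ((Aq p t : ℝ) : ℂ) * (p:ℂ)⁻¹ := by
    rw [← hA]
    linear_combination (((p:ℂ)⁻¹)^2 - (p:ℂ)⁻¹) * hzz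
  rw [wfac, e1, e3, e4]
  push_cast
  rw [← hBc, ← hA, mul_inv]
  ring
lemma Wfac_eq (p : ℕ) (hp : p.Prime) (t : ℝ) :
    Wfac p ((t:ℂ)*I) ((t:ℂ)*I) (-((t:ℂ)*I)) (-((t:ℂ)*I))
      = ((((1 - (p:ℝ)⁻¹ + (Aq p t)^2 * (p:ℝ)⁻¹) *
        (((1 - (p:ℝ)⁻¹)^2 + Aq p t * (p:ℝ)⁻¹)⁻¹)^4 *
        (1 - ((Aq p t)^2 - 4*Aq p t + 2)*(p:ℝ)⁻¹ + ((p:ℝ)⁻¹)^2) *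
        (1 - (p:ℝ)⁻¹)^5 : ℝ)) : ℂ) := by
  obtain ⟨hpc, hz0, hzz, hA⟩ := prime_facts p hp t
  set z := (p:ℂ)^((t:ℂ)*I) with hz
  set a := (t:ℂ)*I with ha
  have e1 : (p:ℂ)^(-a) = z⁻¹ := by rw [hz, Complex.cpow_neg]
  have e2 : (p:ℂ)^(-(-a)) = z := by rw [neg_neg]
  have e3 : (p:ℂ)^(-1 - a) = (p:ℂ)⁻¹ * z⁻¹ := by
    rw [show (-1 - a) = (-1 : ℂ) + (-a) by ring, Complex.cpow_add _ _ hpc,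
      Complex.cpow_neg_one, Complex.cpow_neg, hz]
  have e4 : (p:ℂ)^(-1 - -a) = (p:ℂ)⁻¹ * z := by
    rw [show (-1 - -a) = (-1 : ℂ) + a by ring, Complex.cpow_add _ _ hpc,
      Complex.cpow_neg_one, hz]
  have e5 : (p:ℂ)^(-1 - a - a - -a) = (p:ℂ)⁻¹ * z⁻¹ := by
    rw [show (-1 - a - a - -a) = (-1 : ℂ) + (-a) by ring, Complex.cpow_add _ _ hpc,
      Complex.cpow_neg_one, Complex.cpow_neg, hz]
  have e6 : (p:ℂ)^(-1 - a - -a - -a) = (p:ℂ)⁻¹ * z := by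
    rw [show (-1 - a - -a - -a) = (-1 : ℂ) + a by ring, Complex.cpow_add _ _ hpc,
      Complex.cpow_neg_one, hz]
  have e7 : (p:ℂ)^(-1 - a - a) = (p:ℂ)⁻¹ * (z⁻¹ * z⁻¹) := by
    rw [show (-1 - a - a) = (-1 : ℂ) + (-a + -a) by ring, Complex.cpow_add _ _ hpc,
      Complex.cpow_add _ _ hpc, Complex.cpow_neg_one, Complex.cpow_neg, hz]
  have e8 : (p:ℂ)^(-1 - a - -a) = (p:ℂ)⁻¹ := by
    rw [show (-1 - a - -a) = (-1 : ℂ) by ring, Complex.cpow_neg_one]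
  have e9 : (p:ℂ)^(-1 - -a - -a) = (p:ℂ)⁻¹ * (z * z) := by
    rw [show (-1 - -a - -a) = (-1 : ℂ) + (a + a) by ring, Complex.cpow_add _ _ hpc,
      Complex.cpow_add _ _ hpc, Complex.cpow_neg_one, hz]
  have e10 : (p:ℂ)^(-1 - a - a - -a - -a) = (p:ℂ)⁻¹ := by
    rw [show (-1 - a - a - -a - -a) = (-1 : ℂ) by ring, Complex.cpow_neg_one]
  have h4 : (1 - z⁻¹) * (1 - z⁻¹) * (1 - z) * (1 - z) = (((Aq p t : ℝ)) : ℂ)^2 := by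
    rw [← hA]; ring
  have hinv : (1 - (p:ℂ)⁻¹*z⁻¹)⁻¹ * (1 - (p:ℂ)⁻¹*z⁻¹)⁻¹ * (1 - (p:ℂ)⁻¹*z)⁻¹ * (1 - (p:ℂ)⁻¹*z)⁻¹
      = (((1 - (p:ℂ)⁻¹*z⁻¹) * (1 - (p:ℂ)⁻¹*z))⁻¹)^2 := by
    rw [mul_inv]; ring
  have hBc : (1 - (p:ℂ)⁻¹*z⁻¹) * (1 - (p:ℂ)⁻¹*z)
      = (1 - (p:ℂ)⁻¹)^2 + ((Aq p t : ℝ) : ℂ) * (p:ℂ)⁻¹ := by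
    rw [← hA]
    linear_combination (((p:ℂ)⁻¹)^2 - (p:ℂ)⁻¹) * hzz
  have hCc : (1 - (p:ℂ)⁻¹*(z⁻¹*z⁻¹)) * (1 - (p:ℂ)⁻¹*(z*z))
      = 1 - (((Aq p t : ℝ) : ℂ)^2 - 4*((Aq p t : ℝ) : ℂ) + 2)*(p:ℂ)⁻¹ + ((p:ℂ)⁻¹)^2 := by
    rw [← hA]
    field_simp [hz0, hpc]
    ring
  have h6 : (1 - (p:ℂ)⁻¹*(z⁻¹*z⁻¹)) * (1 - (p:ℂ)⁻¹) * (1 - (p:ℂ)⁻¹) * (1 - (p:ℂ)⁻¹) *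
      (1 - (p:ℂ)⁻¹) * (1 - (p:ℂ)⁻¹*(z*z))
      = (1 - (((Aq p t : ℝ) : ℂ)^2 - 4*((Aq p t : ℝ) : ℂ) + 2)*(p:ℂ)⁻¹ + ((p:ℂ)⁻¹)^2) *
        (1 - (p:ℂ)⁻¹)^4 := by
    rw [← hCc]; ring
  rw [Wfac, e1, e2, e3, e4, e5, e6, e7, e8, e9, e10, h4, hinv, h6, hBc]
  push_cast
  ring
lemma loglem (y : ℝ) (hy : 0 < y) (hq : |y - 1| < 1/2) : |Real.log y| ≤ 2 * |y - 1| := by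
  have hyh : 1/2 < y := by
    rcases abs_lt.mp hq with ⟨h1, _⟩; linarith
  have hup : Real.log y ≤ y - 1 := Real.log_le_sub_one_of_pos hy
  have h2 : Real.log y⁻¹ ≤ y⁻¹ - 1 := Real.log_le_sub_one_of_pos (inv_pos.mpr hy)
  rw [Real.log_inv] at h2
  have h3 : 1 - y⁻¹ ≤ Real.log y := by linarith
  have hyy : y * y⁻¹ = 1 := mul_inv_cancel₀ hy.ne'
  rw [abs_le]
  constructor
  · rcases le_or_gt 1 y with h | h
    · have : y⁻¹ ≤ 1 := by nlinarith
      have : 0 ≤ Real.log y := by linarith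
      have : 0 ≤ |y - 1| := abs_nonneg _
      linarith
    · rw [abs_of_nonpos (by linarith)]
      have hprod : 0 ≤ (2*y - 1) * (1 - y) := by nlinarith
      have : y⁻¹ ≤ 3 - 2*y := by nlinarith
      linarith
  · calc Real.log y ≤ y - 1 := hup
      _ ≤ |y - 1| := le_abs_self _
      _ ≤ 2 * |y - 1| := by have := abs_nonneg (y-1); linarith

lemma pipeline (f : Nat.Primes → ℂ) (r : Nat.Primes → ℝ)
    (hfr : ∀ p, f p = ((r p : ℝ) : ℂ)) (hpos : ∀ p, 0 < r p)
    (hsum : Summable fun p => |r p - 1|) :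
    Summable (fun p => ‖f p - 1‖) ∧ Multipliable f ∧
      (∏' p, f p).im = 0 ∧ 0 < (∏' p, f p).re := by
  have hnorm : ∀ p, ‖f p - 1‖ = |r p - 1| := by
    intro p
    rw [hfr, show ((r p : ℝ) : ℂ) - 1 = (((r p - 1 : ℝ)) : ℂ) by push_cast; ring]
    rw [Complex.norm_real, Real.norm_eq_abs]
  have hS : Summable (fun p => ‖f p - 1‖) := by
    simpa only [hnorm] using hsum
  have hev : ∀ᶠ p in Filter.cofinite, |r p - 1| < 1/2 :=
    hsum.tendsto_cofinite_zero.eventually_lt_const (by norm_num)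
  have hlog : Summable (fun p => Real.log (r p)) := by
    apply Summable.of_norm_bounded_eventually (hsum.mul_left 2)
    exact hev.mono fun p hp => by
      rw [Real.norm_eq_abs]; exact loglem (r p) (hpos p) hp
  have hmulr : HasProd r (∏' p, r p) :=
    (Real.hasProd_of_hasSum_log hpos hlog.hasSum).multipliable.hasProd
  have hprodpos : 0 < ∏' p, r p := by
    have h := Real.rexp_tsum_eq_tprod hpos hlog
    rw [← h]
    exact Real.exp_pos _
  have hmulc : HasProd f ((∏' p, r p : ℝ) : ℂ) := by
    have h := hmulr.map Complex.ofRealHom Complex.continuous_ofReal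
    have he : (Complex.ofRealHom ∘ r) = f := funext fun p => (hfr p).symm
    rwa [he] at h
  refine ⟨hS, ⟨_, hmulc⟩, ?_, ?_⟩
  · rw [hmulc.tprod_eq]; simp
  · rw [hmulc.tprod_eq]; simpa using hprodpos

lemma Aq_le4 (p : ℕ) (hp : p.Prime) (t : ℝ) : Aq p t ≤ 4 := by
  have hp0 : (0:ℝ) < p := by exact_mod_cast hp.pos
  have habs : ‖(p:ℂ)^((t:ℂ)*I)‖ = 1 := by
    rw [show ((p:ℕ):ℂ) = ((p:ℝ):ℂ) by push_cast; ring,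
      Complex.norm_cpow_eq_rpow_re_of_pos hp0]
    simp
  have hn : ‖1 - (p:ℂ)^((t:ℂ)*I)‖ ≤ 2 := by
    calc ‖1 - (p:ℂ)^((t:ℂ)*I)‖ ≤ ‖(1:ℂ)‖ + ‖(p:ℂ)^((t:ℂ)*I)‖ := norm_sub_le _ _
      _ = 2 := by rw [norm_one, habs]; norm_num
  rw [Aq, ← Complex.sq_norm]
  calc ‖1 - (p:ℂ)^((t:ℂ)*I)‖^2 ≤ 2^2 := by
        exact pow_le_pow_left₀ (norm_nonneg _) hn 2
    _ = 4 := by norm_num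

lemma summable_aux (C : ℝ) : Summable (fun p : Nat.Primes => C * (((p:ℕ):ℝ)⁻¹)^2) := by
  have h0 : Summable (fun p : Nat.Primes => ((p:ℕ):ℝ)^(-2:ℝ)) :=
    Nat.Primes.summable_rpow.mpr (by norm_num)
  have h1 : Summable (fun p : Nat.Primes => (((p:ℕ):ℝ)⁻¹)^2) := by
    apply h0.congr; intro p
    rw [Real.rpow_neg (by positivity), show ((2:ℝ)) = ((2:ℕ):ℝ) by norm_num,
      Real.rpow_natCast, inv_pow]
  exact h1.mul_left C

theorem stmt4 (t : ℝ) (ht : t ≠ 0) :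
    Summable (fun p : Nat.Primes => ‖wfac p t - 1‖) ∧
    Multipliable (fun p : Nat.Primes => wfac p t) ∧
    Summable (fun p : Nat.Primes =>
      ‖Wfac p ((t : ℂ) * I) ((t : ℂ) * I) (-((t : ℂ) * I)) (-((t : ℂ) * I)) - 1‖) ∧
    Multipliable (fun p : Nat.Primes =>
      Wfac p ((t : ℂ) * I) ((t : ℂ) * I) (-((t : ℂ) * I)) (-((t : ℂ) * I))) ∧
    (G1 t).im = 0 ∧ 0 < (G1 t).re ∧ (G2 t).im = 0 ∧ 0 < (G2 t).re := by
  have hx0 : ∀ p : Nat.Primes, 0 < ((p:ℕ):ℝ)⁻¹ :=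
    fun p => inv_pos.mpr (by exact_mod_cast p.2.pos)
  have hx2 : ∀ p : Nat.Primes, ((p:ℕ):ℝ)⁻¹ ≤ 1/2 := fun p => by
    have h2 : (2:ℝ) ≤ ((p:ℕ):ℝ) := by exact_mod_cast p.2.two_le
    rw [show (1:ℝ)/2 = (2:ℝ)⁻¹ by norm_num]
    exact inv_anti₀ (by norm_num) h2
  have hA0 : ∀ p : Nat.Primes, 0 ≤ Aq ↑p t := fun p => Complex.normSq_nonneg _
  have hA4 : ∀ p : Nat.Primes, Aq ↑p t ≤ 4 := fun p => Aq_le4 ↑p p.2 t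
  set r1 : Nat.Primes → ℝ := fun p =>
    (1 - ((p:ℕ):ℝ)⁻¹ + Aq ↑p t * ((p:ℕ):ℝ)⁻¹) *
      ((1 - ((p:ℕ):ℝ)⁻¹)^2 + Aq ↑p t * ((p:ℕ):ℝ)⁻¹)⁻¹ * (1 - ((p:ℕ):ℝ)⁻¹) with hr1
  set r2 : Nat.Primes → ℝ := fun p =>
    (1 - ((p:ℕ):ℝ)⁻¹ + (Aq ↑p t)^2 * ((p:ℕ):ℝ)⁻¹) *
      (((1 - ((p:ℕ):ℝ)⁻¹)^2 + Aq ↑p t * ((p:ℕ):ℝ)⁻¹)⁻¹)^4 *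
      (1 - ((Aq ↑p t)^2 - 4*Aq ↑p t + 2)*((p:ℕ):ℝ)⁻¹ + (((p:ℕ):ℝ)⁻¹)^2) *
      (1 - ((p:ℕ):ℝ)⁻¹)^5 with hr2
  have hsum1 : Summable (fun p : Nat.Primes => |r1 p - 1|) := by
    apply Summable.of_nonneg_of_le (fun p => abs_nonneg _)
      (fun (p : Nat.Primes) => rbound1 (Aq ↑p t) (((p:ℕ):ℝ)⁻¹) (hA0 p) (hA4 p) (hx0 p) (hx2 p))
      (summable_aux 16)
  have hsum2 : Summable (fun p : Nat.Primes => |r2 p - 1|) := by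
    apply Summable.of_nonneg_of_le (fun p => abs_nonneg _)
      (fun (p : Nat.Primes) => rbound2 (Aq ↑p t) (((p:ℕ):ℝ)⁻¹) (hA0 p) (hA4 p) (hx0 p) (hx2 p))
      (summable_aux 1256512)
  obtain ⟨hS1, hM1, him1, hre1⟩ := pipeline (fun p : Nat.Primes => wfac ↑p t) r1
    (fun p => wfac_eq ↑p p.2 t)
    (fun p => rpos1 (Aq ↑p t) (((p:ℕ):ℝ)⁻¹) (hA0 p) (hx0 p) (hx2 p)) hsum1
  obtain ⟨hS2, hM2, him2, hre2⟩ := pipeline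
    (fun p : Nat.Primes => Wfac ↑p ((t:ℂ)*I) ((t:ℂ)*I) (-((t:ℂ)*I)) (-((t:ℂ)*I))) r2
    (fun p => Wfac_eq ↑p p.2 t)
    (fun p => rpos2 (Aq ↑p t) (((p:ℕ):ℝ)⁻¹) (hA0 p) (hA4 p) (hx0 p) (hx2 p)) hsum2
  exact ⟨hS1, hM1, hS2, hM2, him1, hre1, him2, hre2⟩
end

section
/- There is an absolute constant C such that for every real T ≥ 1 and all real numbers t₂, t₃, one has ∫_{−T}^{T} (log(2 + |t₁| + |t₂| + |t₃|))^{10} / ( (1 + |t₁|)(1 + |t₁ + t₂ + t₃|) ) dt₁ ≤ C (log(2 + |t₂| + |t₃|))^{11} / (1 + |t₂ + t₃|). -/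
open MeasureTheory intervalIntegral Set

private lemma pow10_add {x y : ℝ} (hx : 0 ≤ x) (hy : 0 ≤ y) :
    (x + y) ^ 10 ≤ 2 ^ 10 * (x ^ 10 + y ^ 10) := by
  have h : x + y ≤ 2 * max x y := by
    rcases le_total x y with h | h
    · simp [max_eq_right h]; linarith
    · simp [max_eq_left h]; linarith
  calc (x + y) ^ 10 ≤ (2 * max x y) ^ 10 := pow_le_pow_left₀ (by positivity) h 10
    _ = 2 ^ 10 * (max x y) ^ 10 := by rw [mul_pow]
    _ ≤ 2 ^ 10 * (x ^ 10 + y ^ 10) := by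
        rcases le_total x y with h | h
        · rw [max_eq_right h]; nlinarith [pow_nonneg hx 10]
        · rw [max_eq_left h]; nlinarith [pow_nonneg hy 10]

private lemma tail_core {R U : ℝ} (hR : 2 ≤ R) (hRU : R ≤ U) :
    ∫ t in R..U, (Real.log (2 + t)) ^ 10 / (2 + t) ^ 2 ≤
      2 ^ 10 * ((Real.log (2 + R)) ^ 10 + 2 * 20 ^ 10) / (2 + R) := by
  have hP : (0:ℝ) < 2 + R := by linarith
  set A : ℝ := 2 ^ 10 * (Real.log (2 + R)) ^ 10 with hA
  set B : ℝ := 2 ^ 10 * 20 ^ 10 * (2 + R) ^ (-(1:ℝ)/2) with hB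
  have hA0 : 0 ≤ A := by
    have : 0 ≤ Real.log (2 + R) := Real.log_nonneg (by linarith)
    positivity
  have hB0 : 0 ≤ B := by positivity
  have hcont : ContinuousOn (fun t : ℝ => (Real.log (2 + t)) ^ 10 / (2 + t) ^ 2)
      (Set.uIcc R U) := by
    rw [Set.uIcc_of_le hRU]
    apply ContinuousOn.div
    · exact ((continuousOn_const.add continuousOn_id).log
        (fun x hx => by rw [Set.mem_Icc] at hx; have : (0:ℝ) < 2 + x := by linarith [hx.1]
                        exact ne_of_gt this)).pow 10
    · fun_prop
    · intro x hx
      rw [Set.mem_Icc] at hx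
      have : (0:ℝ) < 2 + x := by linarith [hx.1]
      positivity
  have hcontg : ContinuousOn
      (fun t : ℝ => A * (2 + t) ^ (-2:ℝ) + B * (2 + t) ^ (-(3:ℝ)/2)) (Set.uIcc R U) := by
    rw [Set.uIcc_of_le hRU]
    have hne : ∀ x ∈ Set.Icc R U, (2 + x) ≠ 0 := by
      intro x hx; rw [Set.mem_Icc] at hx; have : (0:ℝ) < 2 + x := by linarith [hx.1]
      exact ne_of_gt this
    have hc : ContinuousOn (fun t : ℝ => 2 + t) (Set.Icc R U) :=
      continuousOn_const.add continuousOn_id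
    exact (continuousOn_const.mul (hc.rpow_const (fun x hx => Or.inl (hne x hx)))).add
      (continuousOn_const.mul (hc.rpow_const (fun x hx => Or.inl (hne x hx))))
  have hmono : ∫ t in R..U, (Real.log (2 + t)) ^ 10 / (2 + t) ^ 2 ≤
      ∫ t in R..U, (A * (2 + t) ^ (-2:ℝ) + B * (2 + t) ^ (-(3:ℝ)/2)) := by
    apply intervalIntegral.integral_mono_on hRU
      (hcont.intervalIntegrable) (hcontg.intervalIntegrable)
    intro t ht
    rw [Set.mem_Icc] at ht
    have htR : R ≤ t := ht.1
    have hQ : (0:ℝ) < 2 + t := by linarith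
    have hPQ : 2 + R ≤ 2 + t := by linarith
    have hw1 : 1 ≤ (2 + t) / (2 + R) := (one_le_div hP).mpr hPQ
    have hlw : 0 ≤ Real.log ((2 + t) / (2 + R)) := Real.log_nonneg hw1
    have hlP : 0 ≤ Real.log (2 + R) := Real.log_nonneg (by linarith)
    have hsplit : Real.log (2 + t) = Real.log (2 + R) + Real.log ((2 + t) / (2 + R)) := by
      rw [Real.log_div (by positivity) (by positivity)]; ring
    have h10 : (Real.log (2 + t)) ^ 10 ≤
        2 ^ 10 * ((Real.log (2 + R)) ^ 10 + (Real.log ((2 + t) / (2 + R))) ^ 10) := by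
      rw [hsplit]; exact pow10_add hlP hlw
    have hrr : (Real.log ((2 + t) / (2 + R))) ^ 10 ≤
        20 ^ 10 * ((2 + t) / (2 + R)) ^ ((1:ℝ)/2) := by
      have h1 : Real.log ((2 + t) / (2 + R)) ≤ 20 * ((2 + t) / (2 + R)) ^ ((1:ℝ)/20) := by
        have h0 := Real.log_le_rpow_div (by positivity : (0:ℝ) ≤ (2 + t) / (2 + R))
          (by norm_num : (0:ℝ) < 1/20)
        calc Real.log ((2 + t) / (2 + R)) ≤ ((2 + t) / (2 + R)) ^ ((1:ℝ)/20) / (1/20) := h0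
          _ = 20 * ((2 + t) / (2 + R)) ^ ((1:ℝ)/20) := by ring
      calc (Real.log ((2 + t) / (2 + R))) ^ 10
          ≤ (20 * ((2 + t) / (2 + R)) ^ ((1:ℝ)/20)) ^ 10 := pow_le_pow_left₀ hlw h1 10
        _ = 20 ^ 10 * (((2 + t) / (2 + R)) ^ ((1:ℝ)/20)) ^ (10:ℕ) := by rw [mul_pow]
        _ = 20 ^ 10 * ((2 + t) / (2 + R)) ^ ((1:ℝ)/2) := by
            rw [← Real.rpow_natCast (((2 + t) / (2 + R)) ^ ((1:ℝ)/20)) 10,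
              ← Real.rpow_mul (by positivity)]
            norm_num
    have e2 : (2 + t) ^ (-2:ℝ) = ((2 + t) ^ 2)⁻¹ := by
      rw [show (-2:ℝ) = -((2:ℕ):ℝ) by norm_num, Real.rpow_neg hQ.le, Real.rpow_natCast]
    have e3 : ((2 + t) / (2 + R)) ^ ((1:ℝ)/2) =
        (2 + t) ^ ((1:ℝ)/2) * (2 + R) ^ (-(1:ℝ)/2) := by
      rw [Real.div_rpow hQ.le hP.le, show (-(1:ℝ)/2) = -((1:ℝ)/2) by norm_num,
        Real.rpow_neg hP.le, div_eq_mul_inv]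
    have e4 : (2 + t) ^ ((1:ℝ)/2) / (2 + t) ^ 2 = (2 + t) ^ (-(3:ℝ)/2) := by
      rw [← Real.rpow_natCast (2 + t) 2, ← Real.rpow_sub hQ]
      norm_num
    calc (Real.log (2 + t)) ^ 10 / (2 + t) ^ 2
        ≤ (2 ^ 10 * ((Real.log (2 + R)) ^ 10 + (Real.log ((2 + t) / (2 + R))) ^ 10)) /
            (2 + t) ^ 2 := by gcongr
      _ ≤ (2 ^ 10 * ((Real.log (2 + R)) ^ 10 +
            20 ^ 10 * ((2 + t) / (2 + R)) ^ ((1:ℝ)/2))) / (2 + t) ^ 2 := by gcongr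
      _ = A * ((2 + t) ^ 2)⁻¹ +
            2 ^ 10 * 20 ^ 10 * (2 + R) ^ (-(1:ℝ)/2) *
              ((2 + t) ^ ((1:ℝ)/2) / (2 + t) ^ 2) := by rw [e3, hA]; ring
      _ = A * (2 + t) ^ (-2:ℝ) + B * (2 + t) ^ (-(3:ℝ)/2) := by rw [e4, ← e2, hB]
  have hzero : (0:ℝ) ∉ Set.uIcc (2 + R) (2 + U) := by
    intro h
    rcases Set.mem_uIcc.mp h with ⟨h1, _⟩ | ⟨h1, _⟩ <;> linarith
  have hint1 : ∫ t in R..U, (2 + t) ^ (-2:ℝ) ≤ (2 + R)⁻¹ := by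
    rw [intervalIntegral.integral_comp_add_left (fun x : ℝ => x ^ (-2:ℝ)) 2,
      integral_rpow (Or.inr ⟨by norm_num, hzero⟩)]
    rw [show (-2 + 1 : ℝ) = -1 by norm_num, Real.rpow_neg_one, Real.rpow_neg_one]
    have h1 : (0:ℝ) ≤ (2 + U)⁻¹ := inv_nonneg.mpr (by linarith)
    have h4 : ((2 + U)⁻¹ - (2 + R)⁻¹) / (-1 : ℝ) = (2 + R)⁻¹ - (2 + U)⁻¹ := by ring
    rw [h4]
    linarith
  have hint2 : ∫ t in R..U, (2 + t) ^ (-(3:ℝ)/2) ≤ 2 * (2 + R) ^ (-(1:ℝ)/2) := by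
    rw [intervalIntegral.integral_comp_add_left (fun x : ℝ => x ^ (-(3:ℝ)/2)) 2,
      integral_rpow (Or.inr ⟨by norm_num, hzero⟩)]
    rw [show (-(3:ℝ)/2 + 1) = -(1:ℝ)/2 by norm_num]
    have h1 : (0:ℝ) ≤ (2 + U) ^ (-(1:ℝ)/2) := Real.rpow_nonneg (by linarith) _
    have h4 : ((2 + U) ^ (-(1:ℝ)/2) - (2 + R) ^ (-(1:ℝ)/2)) / (-(1:ℝ)/2) =
        2 * ((2 + R) ^ (-(1:ℝ)/2) - (2 + U) ^ (-(1:ℝ)/2)) := by ring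
    rw [h4]
    linarith
  have hci : IntervalIntegrable (fun t : ℝ => (2 + t) ^ (-2:ℝ)) volume R U := by
    apply ContinuousOn.intervalIntegrable
    rw [Set.uIcc_of_le hRU]
    exact (continuousOn_const.add continuousOn_id).rpow_const
      (fun x hx => Or.inl (by rw [Set.mem_Icc] at hx; intro h; have h' : (2:ℝ) + x = 0 := h
                              linarith [hx.1]))
  have hci2 : IntervalIntegrable (fun t : ℝ => (2 + t) ^ (-(3:ℝ)/2)) volume R U := by
    apply ContinuousOn.intervalIntegrable
    rw [Set.uIcc_of_le hRU]
    exact (continuousOn_const.add continuousOn_id).rpow_const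
      (fun x hx => Or.inl (by rw [Set.mem_Icc] at hx; intro h; have h' : (2:ℝ) + x = 0 := h
                              linarith [hx.1]))
  have hsum : ∫ t in R..U, (A * (2 + t) ^ (-2:ℝ) + B * (2 + t) ^ (-(3:ℝ)/2)) =
      (A * ∫ t in R..U, (2 + t) ^ (-2:ℝ)) + (B * ∫ t in R..U, (2 + t) ^ (-(3:ℝ)/2)) := by
    rw [intervalIntegral.integral_add (hci.const_mul A) (hci2.const_mul B),
      intervalIntegral.integral_const_mul, intervalIntegral.integral_const_mul]
  have hfinal : A * (2 + R)⁻¹ + B * (2 * (2 + R) ^ (-(1:ℝ)/2)) =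
      2 ^ 10 * ((Real.log (2 + R)) ^ 10 + 2 * 20 ^ 10) / (2 + R) := by
    have e : (2 + R) ^ (-(1:ℝ)/2) * (2 + R) ^ (-(1:ℝ)/2) = (2 + R)⁻¹ := by
      rw [← Real.rpow_add hP, show (-(1:ℝ)/2 + -(1:ℝ)/2) = -1 by norm_num,
        Real.rpow_neg_one]
    have e' : (2 + R) ^ (-(1:ℝ)/2) * (2 + R) ^ (-(1:ℝ)/2) * (2 + R) = 1 := by
      rw [e]; field_simp
    rw [hA, hB]
    linear_combination (2 ^ 11 * 20 ^ 10 : ℝ) * e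
  calc ∫ t in R..U, (Real.log (2 + t)) ^ 10 / (2 + t) ^ 2
      ≤ ∫ t in R..U, (A * (2 + t) ^ (-2:ℝ) + B * (2 + t) ^ (-(3:ℝ)/2)) := hmono
    _ = (A * ∫ t in R..U, (2 + t) ^ (-2:ℝ)) + (B * ∫ t in R..U, (2 + t) ^ (-(3:ℝ)/2)) := hsum
    _ ≤ A * (2 + R)⁻¹ + B * (2 * (2 + R) ^ (-(1:ℝ)/2)) :=
        add_le_add (mul_le_mul_of_nonneg_left hint1 hA0) (mul_le_mul_of_nonneg_left hint2 hB0)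
    _ = 2 ^ 10 * ((Real.log (2 + R)) ^ 10 + 2 * 20 ^ 10) / (2 + R) := hfinal

private lemma cont_inv_abs : Continuous fun t : ℝ => (1 + |t|)⁻¹ :=
  (continuous_const.add continuous_abs).inv₀ fun t => by show (1:ℝ) + |t| ≠ 0; positivity

private lemma int_abs (X : ℝ) (hX : 0 ≤ X) :
    ∫ t in (-X)..X, (1 + |t|)⁻¹ = 2 * Real.log (1 + X) := by
  have h1 : ∫ t in (0:ℝ)..X, (1 + t)⁻¹ = Real.log (1 + X) := by
    have := intervalIntegral.integral_comp_add_left (a := (0:ℝ)) (b := X)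
      (fun x : ℝ => x⁻¹) 1
    rw [this, integral_inv (by
      intro h
      rcases (Set.mem_uIcc.mp h) with ⟨h1, _⟩ | ⟨_, h2⟩ <;> linarith)]
    simp
  have h2 : ∫ t in (-X)..(0:ℝ), (1 + |t|)⁻¹ = Real.log (1 + X) := by
    have e1 : ∫ t in (-X)..(0:ℝ), (1 + |t|)⁻¹ = ∫ t in (-X)..(0:ℝ), (1 + (-t))⁻¹ := by
      apply intervalIntegral.integral_congr
      intro t ht
      rw [Set.uIcc_of_le (by linarith : -X ≤ (0:ℝ))] at ht
      show (1 + |t|)⁻¹ = (1 + (-t))⁻¹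
      rw [abs_of_nonpos ht.2]
    have e2 : ∫ t in (-X)..(0:ℝ), (1 + (-t))⁻¹ = ∫ t in (-(0:ℝ))..(X), (1 + t)⁻¹ := by
      simpa using intervalIntegral.integral_comp_neg (a := -X) (b := 0) (fun u : ℝ => (1 + u)⁻¹)
    rw [e1, e2]; simp only [neg_zero]; exact h1
  have h3 : ∫ t in (0:ℝ)..X, (1 + |t|)⁻¹ = Real.log (1 + X) := by
    have e1 : ∫ t in (0:ℝ)..X, (1 + |t|)⁻¹ = ∫ t in (0:ℝ)..X, (1 + t)⁻¹ := by
      apply intervalIntegral.integral_congr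
      intro t ht
      rw [Set.uIcc_of_le hX] at ht
      show (1 + |t|)⁻¹ = (1 + t)⁻¹
      rw [abs_of_nonneg ht.1]
    rw [e1]; exact h1
  rw [← intervalIntegral.integral_add_adjacent_intervals (a := -X) (b := 0) (c := X)
    (cont_inv_abs.intervalIntegrable _ _) (cont_inv_abs.intervalIntegrable _ _), h2, h3]
  ring


private lemma tail_bound {R U : ℝ} (hR2 : 2 ≤ R) (hRU : R ≤ U) (g : ℝ → ℝ)
    (hgi : IntervalIntegrable g volume R U)
    (hgb : ∀ t ∈ Set.Icc R U, g t ≤ 2 ^ 12 * ((Real.log (2 + t)) ^ 10 / (2 + t) ^ 2)) :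
    ∫ t in R..U, g t ≤ 2 ^ 22 * ((Real.log (2 + R)) ^ 10 + 2 * 20 ^ 10) / (2 + R) := by
  have hcont_h : ContinuousOn (fun t : ℝ => 2 ^ 12 * ((Real.log (2 + t)) ^ 10 / (2 + t) ^ 2))
      (Set.uIcc R U) := by
    rw [Set.uIcc_of_le hRU]
    apply ContinuousOn.mul continuousOn_const
    apply ContinuousOn.div
    · exact ((continuousOn_const.add continuousOn_id).log
        (fun x hx => by rw [Set.mem_Icc] at hx
                        have : (0:ℝ) < 2 + x := by linarith [hx.1]
                        exact ne_of_gt this)).pow 10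
    · fun_prop
    · intro x hx
      rw [Set.mem_Icc] at hx
      have : (0:ℝ) < 2 + x := by linarith [hx.1]
      positivity
  calc ∫ t in R..U, g t
      ≤ ∫ t in R..U, 2 ^ 12 * ((Real.log (2 + t)) ^ 10 / (2 + t) ^ 2) :=
        intervalIntegral.integral_mono_on hRU hgi hcont_h.intervalIntegrable hgb
    _ = 2 ^ 12 * ∫ t in R..U, (Real.log (2 + t)) ^ 10 / (2 + t) ^ 2 :=
        intervalIntegral.integral_const_mul _ _
    _ ≤ 2 ^ 12 * (2 ^ 10 * ((Real.log (2 + R)) ^ 10 + 2 * 20 ^ 10) / (2 + R)) :=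
        mul_le_mul_of_nonneg_left (tail_core hR2 hRU) (by norm_num)
    _ = 2 ^ 22 * ((Real.log (2 + R)) ^ 10 + 2 * 20 ^ 10) / (2 + R) := by ring

set_option maxHeartbeats 2000000 in
private lemma aux (a s T : ℝ) (ha : 0 ≤ a) (hs : 0 ≤ s) (hsa : s ≤ a) (hT : 0 ≤ T) :
    ∫ t in (-T)..T, (Real.log (2 + |t| + a)) ^ 10 / ((1 + |t|) * (1 + |t + s|)) ≤
      2 ^ 100 * (Real.log (2 + a)) ^ 11 / (1 + s) := by
  have hlog2 : (0.6931471803:ℝ) < Real.log 2 := Real.log_two_gt_d9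
  set L := Real.log (2 + a) with hLdef
  have hL : Real.log 2 ≤ L := Real.log_le_log (by norm_num) (by linarith)
  have hL2 : (1:ℝ)/2 ≤ L := by linarith
  have hL0 : (0:ℝ) ≤ L := by linarith
  set R := 2 + 2*a with hRdef
  have hR2 : (2:ℝ) ≤ R := by simp only [hRdef]; linarith
  set U := max T R with hUdef
  have hRU : R ≤ U := le_max_right _ _
  have hTU : T ≤ U := le_max_left _ _
  have hU0 : 0 ≤ U := le_trans hT hTU
  have hs1 : (0:ℝ) < 1 + s := by linarith
  -- continuity and nonnegativity of the integrand
  have hnumc : Continuous fun t : ℝ => (Real.log (2 + |t| + a)) ^ 10 := by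
    apply Continuous.pow
    apply Continuous.log ((continuous_const.add continuous_abs).add continuous_const)
    intro t
    have := abs_nonneg t
    intro h; change (2:ℝ) + |t| + a = 0 at h; linarith
  have hdenc : Continuous fun t : ℝ => (1 + |t|) * (1 + |t + s|) :=
    (continuous_const.add continuous_abs).mul
      (continuous_const.add (continuous_id.add continuous_const).abs)
  have hfc : Continuous fun t : ℝ =>
      (Real.log (2 + |t| + a)) ^ 10 / ((1 + |t|) * (1 + |t + s|)) := by
    apply hnumc.div hdenc
    intro t
    have h1 := abs_nonneg t; have h2 := abs_nonneg (t + s)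
    positivity
  have hf0 : ∀ t : ℝ, 0 ≤ (Real.log (2 + |t| + a)) ^ 10 / ((1 + |t|) * (1 + |t + s|)) := by
    intro t
    have h1 := abs_nonneg t; have h2 := abs_nonneg (t + s)
    have h3 : (0:ℝ) ≤ Real.log (2 + |t| + a) := Real.log_nonneg (by linarith)
    positivity
  have hInt : ∀ p q : ℝ, IntervalIntegrable
      (fun t : ℝ => (Real.log (2 + |t| + a)) ^ 10 / ((1 + |t|) * (1 + |t + s|)))
      volume p q := fun p q => hfc.intervalIntegrable p q
  -- enlarge the interval
  have hstep1 : ∫ t in (-T)..T, (Real.log (2 + |t| + a)) ^ 10 / ((1 + |t|) * (1 + |t + s|)) ≤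
      ∫ t in (-U)..U, (Real.log (2 + |t| + a)) ^ 10 / ((1 + |t|) * (1 + |t + s|)) :=
    intervalIntegral.integral_mono_interval (by linarith) (by linarith) hTU
      (MeasureTheory.ae_of_all _ hf0) (hInt _ _)
  -- split
  have hsplit : ∫ t in (-U)..U, (Real.log (2 + |t| + a)) ^ 10 / ((1 + |t|) * (1 + |t + s|)) =
      (∫ t in (-U)..(-R), (Real.log (2 + |t| + a)) ^ 10 / ((1 + |t|) * (1 + |t + s|))) +
      ((∫ t in (-R)..R, (Real.log (2 + |t| + a)) ^ 10 / ((1 + |t|) * (1 + |t + s|))) +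
      (∫ t in R..U, (Real.log (2 + |t| + a)) ^ 10 / ((1 + |t|) * (1 + |t + s|)))) := by
    rw [intervalIntegral.integral_add_adjacent_intervals (hInt (-R) R) (hInt R U),
      intervalIntegral.integral_add_adjacent_intervals (hInt (-U) (-R)) (hInt (-R) U)]
  -- middle piece
  have hmid : ∫ t in (-R)..R, (Real.log (2 + |t| + a)) ^ 10 / ((1 + |t|) * (1 + |t + s|)) ≤
      2 ^ 15 * L ^ 11 / (1 + s) := by
    have hgc : Continuous fun t : ℝ =>
        (2 ^ 10 * L ^ 10 / (2 + s)) * ((1 + |t|)⁻¹ + (1 + |t + s|)⁻¹) := by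
      apply Continuous.mul continuous_const
      apply Continuous.add
      · exact (continuous_const.add continuous_abs).inv₀ (fun t => by show (1:ℝ) + |t| ≠ 0; positivity)
      · apply ((continuous_const.add (continuous_id.add continuous_const).abs)).inv₀
        intro t
        have := abs_nonneg (t + s)
        show (1:ℝ) + |t + s| ≠ 0
        positivity
    have hmono : ∫ t in (-R)..R, (Real.log (2 + |t| + a)) ^ 10 / ((1 + |t|) * (1 + |t + s|)) ≤
        ∫ t in (-R)..R, (2 ^ 10 * L ^ 10 / (2 + s)) * ((1 + |t|)⁻¹ + (1 + |t + s|)⁻¹) := by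
      apply intervalIntegral.integral_mono_on (by linarith) (hInt _ _)
        (hgc.intervalIntegrable _ _)
      intro t ht
      rw [Set.mem_Icc] at ht
      have habs : |t| ≤ R := abs_le.mpr ⟨ht.1, ht.2⟩
      have hx : (0:ℝ) < 1 + |t| := by have := abs_nonneg t; linarith
      have hy : (0:ℝ) < 1 + |t + s| := by have := abs_nonneg (t + s); linarith
      have hlogb : Real.log (2 + |t| + a) ≤ 2 * L := by
        have hle : 2 + |t| + a ≤ (2 + a) ^ 2 := by nlinarith [abs_nonneg t]
        calc Real.log (2 + |t| + a) ≤ Real.log ((2 + a) ^ 2) :=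
              Real.log_le_log (by have := abs_nonneg t; linarith) hle
          _ = 2 * L := by rw [Real.log_pow]; push_cast; ring
      have hnum : (Real.log (2 + |t| + a)) ^ 10 ≤ 2 ^ 10 * L ^ 10 := by
        have h0 : 0 ≤ Real.log (2 + |t| + a) :=
          Real.log_nonneg (by have := abs_nonneg t; linarith)
        calc (Real.log (2 + |t| + a)) ^ 10 ≤ (2 * L) ^ 10 := pow_le_pow_left₀ h0 hlogb 10
          _ = 2 ^ 10 * L ^ 10 := by rw [mul_pow]
      have hden : 2 + s ≤ (1 + |t|) + (1 + |t + s|) := by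
        have h := abs_sub (t + s) t
        rw [show t + s - t = s by ring, abs_of_nonneg hs] at h
        linarith
      have hN : (0:ℝ) ≤ 2 ^ 10 * L ^ 10 := by positivity
      calc (Real.log (2 + |t| + a)) ^ 10 / ((1 + |t|) * (1 + |t + s|))
          ≤ (2 ^ 10 * L ^ 10) / ((1 + |t|) * (1 + |t + s|)) := by gcongr
        _ ≤ (2 ^ 10 * L ^ 10 / (2 + s)) * ((1 + |t|)⁻¹ + (1 + |t + s|)⁻¹) := by
            rw [inv_add_inv (ne_of_gt hx) (ne_of_gt hy), div_mul_div_comm,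
              div_le_div_iff₀ (by positivity) (by positivity)]
            have step1 : (2:ℝ) ^ 10 * L ^ 10 * (2 + s) ≤
                2 ^ 10 * L ^ 10 * ((1 + |t|) + (1 + |t + s|)) :=
              mul_le_mul_of_nonneg_left hden hN
            nlinarith [mul_le_mul_of_nonneg_right step1 (le_of_lt (mul_pos hx hy))]
    have hci1 : IntervalIntegrable (fun t : ℝ => (1 + |t|)⁻¹) volume (-R) R :=
      cont_inv_abs.intervalIntegrable _ _
    have hcs : Continuous fun t : ℝ => (1 + |t + s|)⁻¹ := by
      apply ((continuous_const.add (continuous_id.add continuous_const).abs)).inv₀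
      intro t
      have := abs_nonneg (t + s)
      show (1:ℝ) + |t + s| ≠ 0
      positivity
    have hval : ∫ t in (-R)..R, (2 ^ 10 * L ^ 10 / (2 + s)) * ((1 + |t|)⁻¹ + (1 + |t + s|)⁻¹) =
        (2 ^ 10 * L ^ 10 / (2 + s)) *
          ((∫ t in (-R)..R, (1 + |t|)⁻¹) + ∫ t in (-R)..R, (1 + |t + s|)⁻¹) := by
      rw [intervalIntegral.integral_const_mul,
        intervalIntegral.integral_add hci1 (hcs.intervalIntegrable _ _)]
    have hI1 : ∫ t in (-R)..R, (1 + |t|)⁻¹ = 2 * Real.log (1 + R) := int_abs R (by linarith)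
    have hI2 : ∫ t in (-R)..R, (1 + |t + s|)⁻¹ ≤ 2 * Real.log (1 + (R + s)) := by
      have e : ∫ t in (-R)..R, (1 + |t + s|)⁻¹ = ∫ u in (-R + s)..(R + s), (1 + |u|)⁻¹ :=
        intervalIntegral.integral_comp_add_right (fun u : ℝ => (1 + |u|)⁻¹) s
      rw [e]
      have hmi : ∫ u in (-R + s)..(R + s), (1 + |u|)⁻¹ ≤
          ∫ u in (-(R + s))..(R + s), (1 + |u|)⁻¹ :=
        intervalIntegral.integral_mono_interval (show -(R + s) ≤ -R + s by linarith)
          (show -R + s ≤ R + s by linarith) (le_refl (R + s))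
          (MeasureTheory.ae_of_all _ (fun t => by positivity))
          (cont_inv_abs.intervalIntegrable _ _)
      rw [int_abs (R + s) (by linarith)] at hmi
      exact hmi
    have hlR : Real.log (1 + R) ≤ 3 * L := by
      have hle : 1 + R ≤ (2 + a) ^ 3 := by
        simp only [hRdef]
        nlinarith [mul_nonneg ha ha, mul_nonneg (mul_nonneg ha ha) ha]
      calc Real.log (1 + R) ≤ Real.log ((2 + a) ^ 3) := Real.log_le_log (by linarith) hle
        _ = 3 * L := by rw [Real.log_pow]; push_cast; ring
    have hlRs : Real.log (1 + (R + s)) ≤ 3 * L := by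
      have hle : 1 + (R + s) ≤ (2 + a) ^ 3 := by
        simp only [hRdef]
        nlinarith [mul_nonneg ha ha, mul_nonneg (mul_nonneg ha ha) ha]
      calc Real.log (1 + (R + s)) ≤ Real.log ((2 + a) ^ 3) :=
            Real.log_le_log (by linarith) hle
        _ = 3 * L := by rw [Real.log_pow]; push_cast; ring
    have hI2' : (0:ℝ) ≤ ∫ t in (-R)..R, (1 + |t + s|)⁻¹ := by
      apply intervalIntegral.integral_nonneg (by linarith)
      intro u _
      positivity
    calc ∫ t in (-R)..R, (Real.log (2 + |t| + a)) ^ 10 / ((1 + |t|) * (1 + |t + s|))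
        ≤ ∫ t in (-R)..R, (2 ^ 10 * L ^ 10 / (2 + s)) * ((1 + |t|)⁻¹ + (1 + |t + s|)⁻¹) :=
          hmono
      _ = (2 ^ 10 * L ^ 10 / (2 + s)) *
          ((∫ t in (-R)..R, (1 + |t|)⁻¹) + ∫ t in (-R)..R, (1 + |t + s|)⁻¹) := hval
      _ ≤ (2 ^ 10 * L ^ 10 / (2 + s)) * (2 * (3 * L) + 2 * (3 * L)) := by
          apply mul_le_mul_of_nonneg_left _ (by positivity)
          rw [hI1]
          have := hI2.trans (by linarith : 2 * Real.log (1 + (R + s)) ≤ 2 * (3 * L))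
          linarith
      _ = (2 ^ 10 * 12) * L ^ 11 / (2 + s) := by ring
      _ ≤ 2 ^ 15 * L ^ 11 / (1 + s) := by
          apply div_le_div₀ (by positivity) (by nlinarith [pow_nonneg hL0 11]) hs1 (by linarith)
  -- tail comparison constant
  have hlogR : Real.log (2 + R) ≤ 2 * L := by
    have hle : 2 + R ≤ (2 + a) ^ 2 := by simp only [hRdef]; nlinarith
    calc Real.log (2 + R) ≤ Real.log ((2 + a) ^ 2) := Real.log_le_log (by linarith) hle
      _ = 2 * L := by rw [Real.log_pow]; push_cast; ring
  have hTB : 2 ^ 22 * ((Real.log (2 + R)) ^ 10 + 2 * 20 ^ 10) / (2 + R) ≤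
      2 ^ 79 * L ^ 11 / (1 + s) := by
    have h0 : 0 ≤ Real.log (2 + R) := Real.log_nonneg (by linarith)
    have h1 : (Real.log (2 + R)) ^ 10 ≤ 2 ^ 10 * L ^ 10 := by
      calc (Real.log (2 + R)) ^ 10 ≤ (2 * L) ^ 10 := pow_le_pow_left₀ h0 hlogR 10
        _ = 2 ^ 10 * L ^ 10 := by rw [mul_pow]
    have h2 : (1:ℝ) ≤ 2 ^ 10 * L ^ 10 := by
      calc (1:ℝ) = 1 ^ 10 := by norm_num
        _ ≤ (2 * L) ^ 10 := pow_le_pow_left₀ (by norm_num) (by linarith) 10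
        _ = 2 ^ 10 * L ^ 10 := by rw [mul_pow]
    have hnum : 2 ^ 22 * ((Real.log (2 + R)) ^ 10 + 2 * 20 ^ 10) ≤ 2 ^ 78 * L ^ 10 := by
      nlinarith [h1, h2]
    have hL10 : L ^ 10 ≤ 2 * L ^ 11 := by
      have e : L ^ 11 = L ^ 10 * L := by ring
      nlinarith [mul_le_mul_of_nonneg_left hL2 (pow_nonneg hL0 10)]
    have hden : 1 + s ≤ 2 + R := by simp only [hRdef]; linarith
    apply div_le_div₀ (by positivity) ?_ hs1 hden
    calc 2 ^ 22 * ((Real.log (2 + R)) ^ 10 + 2 * 20 ^ 10) ≤ 2 ^ 78 * L ^ 10 := hnum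
      _ ≤ 2 ^ 78 * (2 * L ^ 11) := by nlinarith [hL10]
      _ = 2 ^ 79 * L ^ 11 := by ring
  -- right tail
  have htailR : ∫ t in R..U, (Real.log (2 + |t| + a)) ^ 10 / ((1 + |t|) * (1 + |t + s|)) ≤
      2 ^ 79 * L ^ 11 / (1 + s) := by
    refine le_trans (tail_bound hR2 hRU _ (hInt _ _) ?_) hTB
    intro t ht
    rw [Set.mem_Icc] at ht
    have ht2 : (2:ℝ) ≤ t := le_trans hR2 ht.1
    have hta : a ≤ t - 2 := by
      have : R ≤ t := ht.1
      simp only [hRdef] at this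
      linarith
    have habs : |t| = t := abs_of_nonneg (by linarith)
    have habs2 : |t + s| = t + s := abs_of_nonneg (by linarith)
    rw [habs, habs2]
    have hQ : (0:ℝ) < 2 + t := by linarith
    have h2' : Real.log (2 + t + a) ≤ 2 * Real.log (2 + t) := by
      have h1 : 2 + t + a ≤ (2 + t) ^ 2 := by nlinarith
      calc Real.log (2 + t + a) ≤ Real.log ((2 + t) ^ 2) := Real.log_le_log (by linarith) h1
        _ = 2 * Real.log (2 + t) := by rw [Real.log_pow]; push_cast; ring
    have h0 : 0 ≤ Real.log (2 + t + a) := Real.log_nonneg (by linarith)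
    have hnum : (Real.log (2 + t + a)) ^ 10 ≤ 2 ^ 10 * (Real.log (2 + t)) ^ 10 := by
      calc (Real.log (2 + t + a)) ^ 10 ≤ (2 * Real.log (2 + t)) ^ 10 :=
            pow_le_pow_left₀ h0 h2' 10
        _ = 2 ^ 10 * (Real.log (2 + t)) ^ 10 := by rw [mul_pow]
    have hden : (2 + t) ^ 2 / 4 ≤ (1 + t) * (1 + (t + s)) := by nlinarith
    have hlt : 0 ≤ Real.log (2 + t) := Real.log_nonneg (by linarith)
    calc (Real.log (2 + t + a)) ^ 10 / ((1 + t) * (1 + (t + s)))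
        ≤ (2 ^ 10 * (Real.log (2 + t)) ^ 10) / ((2 + t) ^ 2 / 4) :=
          div_le_div₀ (by positivity) hnum (by positivity) hden
      _ = 2 ^ 12 * ((Real.log (2 + t)) ^ 10 / (2 + t) ^ 2) := by
          field_simp
          ring
  -- left tail
  have hneg : (∫ t in (-U)..(-R), (Real.log (2 + |t| + a)) ^ 10 / ((1 + |t|) * (1 + |t + s|)))
      = ∫ t in R..U, (Real.log (2 + |(-t)| + a)) ^ 10 / ((1 + |(-t)|) * (1 + |(-t) + s|)) :=
    (intervalIntegral.integral_comp_neg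
      (fun t : ℝ => (Real.log (2 + |t| + a)) ^ 10 / ((1 + |t|) * (1 + |t + s|)))).symm
  have htailL : ∫ t in (-U)..(-R),
      (Real.log (2 + |t| + a)) ^ 10 / ((1 + |t|) * (1 + |t + s|)) ≤
      2 ^ 79 * L ^ 11 / (1 + s) := by
    rw [hneg]
    refine le_trans (tail_bound hR2 hRU _ ((hfc.comp continuous_neg).intervalIntegrable _ _) ?_)
      hTB
    intro t ht
    rw [Set.mem_Icc] at ht
    have ht2 : (2:ℝ) ≤ t := le_trans hR2 ht.1
    have hta : a ≤ (t - 2) / 2 := by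
      have : R ≤ t := ht.1
      simp only [hRdef] at this
      linarith
    have habs : |(-t)| = t := by rw [abs_neg, abs_of_nonneg (by linarith : (0:ℝ) ≤ t)]
    have habs2 : |(-t) + s| = t - s := by
      rw [abs_of_nonpos (by linarith : (-t) + s ≤ 0)]
      ring
    rw [habs, habs2]
    have hQ : (0:ℝ) < 2 + t := by linarith
    have h2' : Real.log (2 + t + a) ≤ 2 * Real.log (2 + t) := by
      have h1 : 2 + t + a ≤ (2 + t) ^ 2 := by nlinarith
      calc Real.log (2 + t + a) ≤ Real.log ((2 + t) ^ 2) := Real.log_le_log (by linarith) h1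
        _ = 2 * Real.log (2 + t) := by rw [Real.log_pow]; push_cast; ring
    have h0 : 0 ≤ Real.log (2 + t + a) := Real.log_nonneg (by linarith)
    have hnum : (Real.log (2 + t + a)) ^ 10 ≤ 2 ^ 10 * (Real.log (2 + t)) ^ 10 := by
      calc (Real.log (2 + t + a)) ^ 10 ≤ (2 * Real.log (2 + t)) ^ 10 :=
            pow_le_pow_left₀ h0 h2' 10
        _ = 2 ^ 10 * (Real.log (2 + t)) ^ 10 := by rw [mul_pow]
    have hden : (2 + t) ^ 2 / 4 ≤ (1 + t) * (1 + (t - s)) := by nlinarith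
    have hlt : 0 ≤ Real.log (2 + t) := Real.log_nonneg (by linarith)
    calc (Real.log (2 + t + a)) ^ 10 / ((1 + t) * (1 + (t - s)))
        ≤ (2 ^ 10 * (Real.log (2 + t)) ^ 10) / ((2 + t) ^ 2 / 4) :=
          div_le_div₀ (by positivity) hnum (by positivity) hden
      _ = 2 ^ 12 * ((Real.log (2 + t)) ^ 10 / (2 + t) ^ 2) := by
          field_simp
          ring
  -- conclusion
  have hfin : 2 ^ 79 * L ^ 11 / (1 + s) + (2 ^ 15 * L ^ 11 / (1 + s) +
      2 ^ 79 * L ^ 11 / (1 + s)) ≤ 2 ^ 100 * L ^ 11 / (1 + s) := by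
    rw [← add_div, ← add_div]
    gcongr
    nlinarith [pow_nonneg hL0 11]
  calc ∫ t in (-T)..T, (Real.log (2 + |t| + a)) ^ 10 / ((1 + |t|) * (1 + |t + s|))
      ≤ ∫ t in (-U)..U, (Real.log (2 + |t| + a)) ^ 10 / ((1 + |t|) * (1 + |t + s|)) := hstep1
    _ = _ := hsplit
    _ ≤ 2 ^ 79 * L ^ 11 / (1 + s) + (2 ^ 15 * L ^ 11 / (1 + s) + 2 ^ 79 * L ^ 11 / (1 + s)) :=
        add_le_add htailL (add_le_add hmid htailR)
    _ ≤ 2 ^ 100 * L ^ 11 / (1 + s) := hfin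


theorem stmt19 :
    ∃ C : ℝ, ∀ T : ℝ, 1 ≤ T → ∀ t2 t3 : ℝ,
      (∫ t1 in (-T)..T,
          (Real.log (2 + |t1| + |t2| + |t3|)) ^ 10 / ((1 + |t1|) * (1 + |t1 + t2 + t3|)))
        ≤ C * (Real.log (2 + |t2| + |t3|)) ^ 11 / (1 + |t2 + t3|) := by
  refine ⟨2 ^ 100, ?_⟩
  intro T hT t2 t3
  have hT0 : (0:ℝ) ≤ T := by linarith
  set a := |t2| + |t3| with hadef
  have ha : 0 ≤ a := by positivity
  have habs : |t2 + t3| ≤ a := abs_add_le t2 t3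
  have hrw2 : (2:ℝ) + |t2| + |t3| = 2 + a := by simp only [hadef]; ring
  rcases le_or_gt 0 (t2 + t3) with hc | hc
  · have e : (∫ t1 in (-T)..T,
        (Real.log (2 + |t1| + |t2| + |t3|)) ^ 10 / ((1 + |t1|) * (1 + |t1 + t2 + t3|))) =
        ∫ t1 in (-T)..T,
          (Real.log (2 + |t1| + a)) ^ 10 / ((1 + |t1|) * (1 + |t1 + (t2 + t3)|)) := by
      apply intervalIntegral.integral_congr
      intro t _
      simp only [hadef]
      rw [← add_assoc ((2:ℝ) + |t|) |t2| |t3|, ← add_assoc t t2 t3]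
    rw [e, hrw2, abs_of_nonneg hc]
    exact aux a (t2 + t3) T ha hc (by linarith [le_abs_self (t2 + t3)]) hT0
  · set s := -(t2 + t3) with hsdef
    have hs : 0 ≤ s := by simp only [hsdef]; linarith
    have hsa : s ≤ a := by
      have h1 : -(t2 + t3) ≤ |t2 + t3| := neg_le_abs _
      simp only [hsdef]; linarith
    have e : (∫ t1 in (-T)..T,
        (Real.log (2 + |t1| + |t2| + |t3|)) ^ 10 / ((1 + |t1|) * (1 + |t1 + t2 + t3|))) =
        ∫ t1 in (-T)..T,
          (Real.log (2 + |t1| + a)) ^ 10 / ((1 + |t1|) * (1 + |t1 + s|)) := by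
      have e1 : (∫ t1 in (-T)..T,
          (Real.log (2 + |t1| + |t2| + |t3|)) ^ 10 / ((1 + |t1|) * (1 + |t1 + t2 + t3|))) =
          ∫ t1 in (-T)..T,
            (Real.log (2 + |(-t1)| + a)) ^ 10 / ((1 + |(-t1)|) * (1 + |(-t1) + s|)) := by
        apply intervalIntegral.integral_congr
        intro t _
        show Real.log (2 + |t| + |t2| + |t3|) ^ 10 / ((1 + |t|) * (1 + |t + t2 + t3|)) =
          Real.log (2 + |(-t)| + a) ^ 10 / ((1 + |(-t)|) * (1 + |(-t) + s|))
        rw [abs_neg, show (-t) + s = -(t + t2 + t3) by simp only [hsdef]; ring, abs_neg]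
        simp only [hadef]
        rw [← add_assoc ((2:ℝ) + |t|) |t2| |t3|]
      rw [e1]
      simpa using intervalIntegral.integral_comp_neg (a := -T) (b := T)
        (fun t : ℝ => (Real.log (2 + |t| + a)) ^ 10 / ((1 + |t|) * (1 + |t + s|)))
    have habs2 : |t2 + t3| = s := by rw [abs_of_neg hc]
    rw [e, hrw2, habs2]
    exact aux a s T ha hs hsa hT0
end
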